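/- arXiv:0912.0431 — 8 statements merged into one kernel-verified Lean document; each statement's English description precedes it below -/
import Mathlib

section
/- For every natural number n > 1 there exists an n-optimal matrix of partitions, i.e., a family (P_{k,m} : k ∈ ℕ, m < n) of partitions of ℕ into infinitely many infinite pieces P_{k,m} = {a_i^{k,m} : i ∈ ℕ} such that (i) for every column m < n and every finite selection of one piece from each of finitely many rows of column m, the intersection of the selected pieces is infinite, and (ii) whenever one selects n pieces a^{k(0),m(0)}_{i(0)}, …, a^{k(n-1),m(n-1)}_{i(n-1)} with pairwise distinct pairs (k(j), m(j)) and with not all column indices m(j) equal, the intersection of these n pieces is a singleton. -/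
/-- A partition of ℕ into infinitely many (pairwise disjoint, covering) infinite pieces,
indexed by ℕ. -/
def IsInfinitePartition (a : ℕ → Set ℕ) : Prop :=
  (∀ i, (a i).Infinite) ∧ (∀ i j, i ≠ j → Disjoint (a i) (a j)) ∧ (⋃ i, a i) = Set.univ

/-- An `n`-optimal matrix of partitions: a family `P (k, m) = {a k m i | i ∈ ℕ}`
(`k ∈ ℕ` a row index, `m < n` a column index) of partitions of ℕ into infinite pieces
such that (i) any intersection of finitely many pieces taken from distinct rows of a
single column is infinite, and (ii) any intersection of `n` pieces with pairwise distinct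
(row, column) index pairs, not all from the same column, is a singleton. -/
def OptimalMatrix (n : ℕ) (a : ℕ → Fin n → ℕ → Set ℕ) : Prop :=
  (∀ k m, IsInfinitePartition (a k m)) ∧
  (∀ m : Fin n, ∀ k : ℕ, ∀ r i : Fin k → ℕ, Function.Injective r →
    (⋂ ℓ, a (r ℓ) m (i ℓ)).Infinite) ∧
  (∀ i k : Fin n → ℕ, ∀ m : Fin n → Fin n,
    (∀ j ℓ : Fin n, j ≠ ℓ → (k j, m j) ≠ (k ℓ, m ℓ)) →
    (∃ j ℓ : Fin n, m j ≠ m ℓ) →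
    ∃ x : ℕ, (⋂ j, a (k j) (m j) (i j)) = {x})

open Classical

noncomputable def OMenc (n : ℕ) : (List ((ℕ × Fin n) × ℕ) × ℕ) ≃ ℕ :=
  letI : Denumerable (List ((ℕ × Fin n) × ℕ) × ℕ) := Denumerable.ofEncodableOfInfinite _
  Denumerable.eqv _

noncomputable def OMσ (n s : ℕ) : List ((ℕ × Fin n) × ℕ) := ((OMenc n).symm s).1

def OMgoodB (n : ℕ) (σ : List ((ℕ × Fin n) × ℕ)) : Prop :=
  (σ.map Prod.fst).Nodup ∧ ∀ p ∈ σ, ∀ p' ∈ σ, p.1.2 = p'.1.2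

def OMgoodC (n : ℕ) (σ : List ((ℕ × Fin n) × ℕ)) : Prop :=
  (σ.map Prod.fst).Nodup ∧ σ.length = n ∧ ∃ p ∈ σ, ∃ p' ∈ σ, p.1.2 ≠ p'.1.2

noncomputable def OMstep (n s : ℕ) (prev : ℕ → ℕ × Fin n → ℕ) (q : ℕ × Fin n) : ℕ :=
  if h : (OMgoodB n (OMσ n s) ∨
      (OMgoodC n (OMσ n s) ∧ ∀ t < s, ¬ ∀ p ∈ OMσ n s, prev t p.1 = p.2)) ∧
      ∃ v, (q, v) ∈ OMσ n s then
    h.2.choose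
  else
    ((Finset.range s).sup fun t => prev t q) + 1

noncomputable def OMcs (n : ℕ) : ℕ → ℕ → ℕ × Fin n → ℕ
  | 0 => fun _ _ => 0
  | s + 1 => fun t => if t = s then OMstep n s (OMcs n s) else OMcs n s t

noncomputable def OMc (n t : ℕ) : ℕ × Fin n → ℕ := OMcs n (t + 1) t

lemma OMcs_eq (n : ℕ) : ∀ s t, t < s → OMcs n s t = OMc n t := by
  intro s
  induction s with
  | zero => omega
  | succ s ih =>
    intro t ht
    by_cases h : t = s
    · subst h
      show OMcs n (t + 1) t = OMc n t
      rfl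
    · show (if t = s then OMstep n s (OMcs n s) else OMcs n s t) = OMc n t
      rw [if_neg h]
      exact ih t (by omega)

lemma OMstep_congr (n s : ℕ) {prev prev' : ℕ → ℕ × Fin n → ℕ}
    (h : ∀ t, t < s → prev t = prev' t) : OMstep n s prev = OMstep n s prev' := by
  have hc : ((OMgoodB n (OMσ n s) ∨
      (OMgoodC n (OMσ n s) ∧ ∀ t < s, ¬ ∀ p ∈ OMσ n s, prev t p.1 = p.2))) =
      ((OMgoodB n (OMσ n s) ∨
      (OMgoodC n (OMσ n s) ∧ ∀ t < s, ¬ ∀ p ∈ OMσ n s, prev' t p.1 = p.2))) := by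
    apply propext
    apply or_congr_right
    apply and_congr_right'
    constructor <;> intro H t ht hall <;> apply H t ht <;> intro p hp
    · rw [h t ht]; exact hall p hp
    · rw [← h t ht]; exact hall p hp
  have hs : ∀ q, ((Finset.range s).sup fun t => prev t q) =
      ((Finset.range s).sup fun t => prev' t q) := by
    intro q
    apply Finset.sup_congr rfl
    intro t ht
    rw [h t (Finset.mem_range.mp ht)]
  funext q
  unfold OMstep
  simp only [hc, hs]

/-- The condition under which stage `s` is a "creating" stage. -/
def OMCond (n s : ℕ) : Prop :=
  OMgoodB n (OMσ n s) ∨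
    (OMgoodC n (OMσ n s) ∧ ∀ t < s, ¬ ∀ p ∈ OMσ n s, OMc n t p.1 = p.2)

lemma dite_inst_irrel {c : Prop} (i1 i2 : Decidable c) {α : Sort*} (t : c → α) (e : ¬c → α) :
    @dite α c i1 t e = @dite α c i2 t e := by
  cases Subsingleton.elim i1 i2
  rfl

lemma OMc_eq (n s : ℕ) : OMc n s = fun q =>
    if h : OMCond n s ∧ ∃ v, (q, v) ∈ OMσ n s then
      h.2.choose
    else
      ((Finset.range s).sup fun t => OMc n t q) + 1 := by
  have h1 : OMc n s = OMstep n s (OMcs n s) := by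
    show OMcs n (s + 1) s = _
    show (if s = s then OMstep n s (OMcs n s) else OMcs n s s) = _
    rw [if_pos rfl]
  rw [h1, OMstep_congr n s (fun t ht => OMcs_eq n s t ht)]
  unfold OMstep OMCond
  funext q
  exact dite_inst_irrel _ _ _ _

lemma OMc_eq' (n s : ℕ) (q : ℕ × Fin n) : OMc n s q =
    if h : OMCond n s ∧ ∃ v, (q, v) ∈ OMσ n s then
      h.2.choose
    else
      ((Finset.range s).sup fun t => OMc n t q) + 1 :=
  congrFun (OMc_eq n s) q

lemma OMval_unique {n : ℕ} {σ : List ((ℕ × Fin n) × ℕ)} (h : (σ.map Prod.fst).Nodup)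
    {q : ℕ × Fin n} {v v' : ℕ} (h1 : (q, v) ∈ σ) (h2 : (q, v') ∈ σ) : v = v' := by
  induction σ with
  | nil => simp at h1
  | cons a tl ih =>
    rw [List.map_cons, List.nodup_cons] at h
    rcases List.mem_cons.mp h1 with h1' | h1' <;> rcases List.mem_cons.mp h2 with h2' | h2'
    · rw [← h1'] at h2'
      exact ((Prod.ext_iff.mp h2').2).symm
    · exact absurd (List.mem_map.mpr ⟨(q, v'), h2', by rw [← h1']⟩) h.1
    · exact absurd (List.mem_map.mpr ⟨(q, v), h1', by rw [← h2']⟩) h.1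
    · exact ih h.2 h1' h2'

/-- At a creating stage, prescribed values are taken. -/
lemma OMc_prescribed {n s : ℕ} (hc : OMCond n s)
    (hnd : ((OMσ n s).map Prod.fst).Nodup)
    {q : ℕ × Fin n} {v : ℕ} (hm : (q, v) ∈ OMσ n s) : OMc n s q = v := by
  have hex : ∃ w, (q, w) ∈ OMσ n s := ⟨v, hm⟩
  rw [OMc_eq', dif_pos ⟨hc, hex⟩]
  exact OMval_unique hnd hex.choose_spec hm

/-- If a later point agrees with an earlier one somewhere, the later stage was creating
and the agreement is at a prescribed pair. -/
lemma OMc_agree {n t s : ℕ} (hts : t < s) {q : ℕ × Fin n}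
    (h : OMc n s q = OMc n t q) :
    OMCond n s ∧ (q, OMc n s q) ∈ OMσ n s := by
  by_cases hc : OMCond n s ∧ ∃ v, (q, v) ∈ OMσ n s
  · refine ⟨hc.1, ?_⟩
    rw [OMc_eq' n s q, dif_pos hc]
    exact hc.2.choose_spec
  · exfalso
    have hd : OMc n s q = ((Finset.range s).sup fun t => OMc n t q) + 1 := by
      rw [OMc_eq' n s q, dif_neg hc]
    have hle : OMc n t q ≤ (Finset.range s).sup fun t => OMc n t q :=
      Finset.le_sup (f := fun t => OMc n t q) (Finset.mem_range.mpr hts)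
    omega

/-- No two distinct points realize the same admissible selection. -/
lemma OM_unique {n : ℕ} {A : Fin n → ℕ × Fin n} (hA : Function.Injective A)
    (hsp : ∃ j ℓ, (A j).2 ≠ (A ℓ).2) {v : Fin n → ℕ} {t s : ℕ} (hts : t < s)
    (ht : ∀ j, OMc n t (A j) = v j) (hs : ∀ j, OMc n s (A j) = v j) : False := by
  have hag : ∀ j, OMCond n s ∧ (A j, v j) ∈ OMσ n s := by
    intro j
    have h := OMc_agree hts (q := A j) (by rw [ht j, hs j])
    rwa [hs j] at h
  obtain ⟨j1, ℓ1, hne⟩ := hsp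
  rcases (hag j1).1 with hB | ⟨hC, hnor⟩
  · exact hne (hB.2 _ (hag j1).2 _ (hag ℓ1).2)
  · apply hnor t hts
    have hkeys : ∀ p ∈ OMσ n s, ∃ j, A j = p.1 := by
      intro p hp
      have hnd := hC.1
      have hsub : Finset.image A Finset.univ ⊆ ((OMσ n s).map Prod.fst).toFinset := by
        intro x hx
        obtain ⟨j, _, rfl⟩ := Finset.mem_image.mp hx
        exact List.mem_toFinset.mpr (List.mem_map.mpr ⟨(A j, v j), (hag j).2, rfl⟩)
      have hcard : ((OMσ n s).map Prod.fst).toFinset.card ≤ (Finset.image A Finset.univ).card := by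
        rw [Finset.card_image_of_injective _ hA, Finset.card_univ, Fintype.card_fin,
          List.toFinset_card_of_nodup hnd, List.length_map, hC.2.1]
      have heq := Finset.eq_of_subset_of_card_le hsub hcard
      have hmem : p.1 ∈ ((OMσ n s).map Prod.fst).toFinset :=
        List.mem_toFinset.mpr (List.mem_map.mpr ⟨p, hp, rfl⟩)
      rw [← heq] at hmem
      obtain ⟨j, _, hj⟩ := Finset.mem_image.mp hmem
      exact ⟨j, hj⟩
    intro p hp
    obtain ⟨j, hj⟩ := hkeys p hp
    have hp' : (A j, p.2) ∈ OMσ n s := by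
      rw [hj, Prod.mk.eta]; exact hp
    have hval : p.2 = v j := OMval_unique hC.1 hp' (hag j).2
    rw [← hj, ht j, hval]

/-- Every good-C assignment is realized by some point. -/
lemma OM_existsC {n : ℕ} {σ : List ((ℕ × Fin n) × ℕ)} (hσ : OMgoodC n σ) :
    ∃ x, ∀ p ∈ σ, OMc n x p.1 = p.2 := by
  set s := OMenc n (σ, 0) with hsdef
  have hσs : OMσ n s = σ := by
    rw [OMσ, hsdef, Equiv.symm_apply_apply]
  by_cases h : ∃ t, t < s ∧ ∀ p ∈ σ, OMc n t p.1 = p.2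
  · obtain ⟨t, _, ht⟩ := h
    exact ⟨t, ht⟩
  · refine ⟨s, fun p hp => ?_⟩
    have hcond : OMCond n s := by
      refine Or.inr ⟨hσs ▸ hσ, fun t hts hreal => ?_⟩
      exact h ⟨t, hts, by rw [hσs] at hreal; exact hreal⟩
    have hnd : ((OMσ n s).map Prod.fst).Nodup := by rw [hσs]; exact hσ.1
    have hm : (p.1, p.2) ∈ OMσ n s := by rw [hσs, Prod.mk.eta]; exact hp
    exact OMc_prescribed hcond hnd hm

/-- Every good-B assignment is realized by the point created at each of its stages. -/
lemma OM_existsB {n : ℕ} {σ : List ((ℕ × Fin n) × ℕ)} (hσ : OMgoodB n σ) (j : ℕ) :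
    ∀ p ∈ σ, OMc n (OMenc n (σ, j)) p.1 = p.2 := by
  set s := OMenc n (σ, j) with hsdef
  have hσs : OMσ n s = σ := by
    rw [OMσ, hsdef, Equiv.symm_apply_apply]
  intro p hp
  have hcond : OMCond n s := Or.inl (hσs ▸ hσ)
  have hnd : ((OMσ n s).map Prod.fst).Nodup := by rw [hσs]; exact hσ.1
  have hm : (p.1, p.2) ∈ OMσ n s := by rw [hσs, Prod.mk.eta]; exact hp
  exact OMc_prescribed hcond hnd hm

lemma OMenc_pair_inj (n : ℕ) (σ : List ((ℕ × Fin n) × ℕ)) :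
    Function.Injective (fun j : ℕ => OMenc n (σ, j)) := by
  intro a b h
  have := (OMenc n).injective h
  simpa using congrArg Prod.snd this

/-- For every natural number `n > 1` there is an `n`-optimal matrix of partitions. -/
theorem exists_optimal_matrix : ∀ n : ℕ, 1 < n →
    ∃ a : ℕ → Fin n → ℕ → Set ℕ, OptimalMatrix n a := by
  intro n _
  refine ⟨fun k m i => {x | OMc n x (k, m) = i}, ?_, ?_, ?_⟩
  · -- partitions
    intro k m
    refine ⟨fun i => ?_, fun i j hij => ?_, ?_⟩
    · -- each piece infinite
      have hσ : OMgoodB n [(((k, m) : ℕ × Fin n), i)] := by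
        constructor
        · simp
        · intro p hp p' hp'
          simp only [List.mem_singleton] at hp hp'
          subst hp; subst hp'; rfl
      apply Set.infinite_of_injective_forall_mem
        (f := fun j : ℕ => OMenc n ([(((k, m) : ℕ × Fin n), i)], j))
        (OMenc_pair_inj n _)
      intro j
      exact OM_existsB hσ j _ (List.mem_singleton.mpr rfl)
    · -- disjoint
      rw [Set.disjoint_left]
      intro x hx hx'
      exact hij ((hx.symm.trans hx' : i = j))
    · -- covers
      apply Set.eq_univ_of_forall
      intro x
      exact Set.mem_iUnion.mpr ⟨OMc n x (k, m), rfl⟩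
  · -- condition (i)
    intro m K r i hr
    set σ : List ((ℕ × Fin n) × ℕ) := List.ofFn fun ℓ : Fin K => (((r ℓ, m) : ℕ × Fin n), i ℓ)
      with hσdef
    have hσ : OMgoodB n σ := by
      constructor
      · rw [hσdef, List.map_ofFn]
        refine List.nodup_ofFn.mpr ?_
        intro a b h
        exact hr (congrArg Prod.fst (h : ((r a, m) : ℕ × Fin n) = (r b, m)))
      · intro p hp p' hp'
        rw [hσdef, List.mem_ofFn] at hp hp'
        obtain ⟨ℓ, rfl⟩ := hp
        obtain ⟨ℓ', rfl⟩ := hp'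
        rfl
    apply Set.infinite_of_injective_forall_mem
      (f := fun j : ℕ => OMenc n (σ, j)) (OMenc_pair_inj n σ)
    intro j
    refine Set.mem_iInter.mpr fun ℓ => ?_
    exact OM_existsB hσ j ((((r ℓ, m) : ℕ × Fin n), i ℓ)) (by rw [hσdef]; exact List.mem_ofFn.mpr ⟨ℓ, rfl⟩)
  · -- condition (ii)
    intro i k m hdist hsp
    set A : Fin n → ℕ × Fin n := fun j => (k j, m j) with hAdef
    have hA : Function.Injective A := by
      intro a b h
      by_contra hne
      exact hdist a b hne h
    set σ : List ((ℕ × Fin n) × ℕ) := List.ofFn fun j => (A j, i j) with hσdef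
    have hmem : ∀ j, (A j, i j) ∈ σ := fun j => by
      rw [hσdef]; exact List.mem_ofFn.mpr ⟨j, rfl⟩
    have hσ : OMgoodC n σ := by
      refine ⟨?_, ?_, ?_⟩
      · rw [hσdef, List.map_ofFn]
        exact List.nodup_ofFn.mpr fun a b h => hA (h : A a = A b)
      · rw [hσdef, List.length_ofFn]
      · obtain ⟨j, ℓ, hne⟩ := hsp
        exact ⟨(A j, i j), hmem j, (A ℓ, i ℓ), hmem ℓ, hne⟩
    obtain ⟨x, hx⟩ := OM_existsC hσ
    have hxr : ∀ j, OMc n x (A j) = i j := fun j => hx _ (hmem j)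
    refine ⟨x, ?_⟩
    apply Set.eq_singleton_iff_unique_mem.mpr
    constructor
    · exact Set.mem_iInter.mpr fun j => hxr j
    · intro y hy
      have hyr : ∀ j, OMc n y (A j) = i j := fun j => Set.mem_iInter.mp hy j
      by_contra hne
      have hsp' : ∃ j ℓ, (A j).2 ≠ (A ℓ).2 := hsp
      rcases Nat.lt_or_ge y x with hlt | hge
      · exact OM_unique hA hsp' hlt hyr hxr
      · exact OM_unique hA hsp' (Nat.lt_of_le_of_ne hge (fun h => hne h.symm)) hxr hyr
end

section
/- If T is a Souslin tree (a tree of height ω₁ in which every antichain and every chain is countable) that is normal and ℵ₀-splitting, then the level product T ⊗ T (the union over α < ω₁ of T_α × T_α, ordered componentwise) contains an uncountable antichain. -/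
open Cardinal Ordinal Set

universe u

variable {α : Type u}

/-- `ht` is the height function of a tree order on `α`: predecessors of each node form a
chain (together with well-foundedness of `Ordinal`-valued height this means they are
well-ordered), heights are strictly monotone, and below each node every smaller ordinal
is realized as the height of a predecessor. -/
structure IsTreeHt [PartialOrder α] (ht : α → Ordinal) : Prop where
  pred_chain : ∀ t : α, IsChain (· < ·) (Set.Iio t)
  ht_lt : ∀ s t : α, s < t → ht s < ht t
  ht_onto : ∀ t : α, ∀ β, β < ht t → ∃ s, s < t ∧ ht s = β

/-- Normality: unique root below everything, at least two immediate successors, successors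
in every higher nonempty level, unique limits. -/
def IsNormalTree [PartialOrder α] (ht : α → Ordinal) : Prop :=
  (∃ r : α, ∀ t, r ≤ t) ∧
  (∀ t : α, ∃ s u : α, t < s ∧ t < u ∧ s ≠ u ∧ ht s = ht t + 1 ∧ ht u = ht t + 1) ∧
  (∀ t : α, ∀ β, ht t < β → (∃ u : α, ht u = β) → ∃ s, t < s ∧ ht s = β) ∧
  (∀ s t : α, ht s = ht t → Order.IsSuccLimit (ht s) → Set.Iio s = Set.Iio t → s = t)

/-- Every node has exactly ℵ₀ immediate successors. -/
def Aleph0Splitting [PartialOrder α] (ht : α → Ordinal) : Prop :=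
  ∀ t : α, {s | t < s ∧ ht s = ht t + 1}.Infinite ∧ {s | t < s ∧ ht s = ht t + 1}.Countable

/-- A Souslin tree: a tree of height ω₁ all of whose antichains and chains are countable. -/
def IsSouslinTree [PartialOrder α] (ht : α → Ordinal) : Prop :=
  IsTreeHt ht ∧
  (∀ t : α, ht t < (Cardinal.aleph 1).ord) ∧
  (∀ β, β < (Cardinal.aleph 1).ord → ∃ t : α, ht t = β) ∧
  (∀ A : Set α, IsAntichain (· ≤ ·) A → A.Countable) ∧
  (∀ C : Set α, IsChain (· ≤ ·) C → C.Countable)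

/-- The level product `T ⊗ T` of a normal ℵ₀-splitting Souslin tree contains an
uncountable antichain. -/
theorem square_of_souslin_not_ccc [PartialOrder α] (ht : α → Ordinal)
    (hS : IsSouslinTree ht) (hN : IsNormalTree ht) (hA : Aleph0Splitting ht) :
    ∃ A : Set (α × α), (∀ p ∈ A, ht p.1 = ht p.2) ∧
      IsAntichain (· ≤ ·) A ∧ ¬ A.Countable := by
  obtain ⟨hT, hlt, honto, hanti, hchain⟩ := hS
  obtain ⟨hroot, hsucc, hext, hlim⟩ := hN
  choose s u hs hu hne hhs hhu using hsucc
  -- comparability below a common upper bound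
  have cmp : ∀ x y z : α, x < z → y < z → ht x ≤ ht y → x ≤ y := by
    intro x y z hx hy hxy
    rcases eq_or_ne x y with rfl | hne'
    · exact le_rfl
    rcases hT.pred_chain z hx hy hne' with h | h
    · exact h.le
    · exact absurd (hT.ht_lt _ _ h) (not_lt.2 hxy)
  have sinj : Function.Injective s := by
    intro t1 t2 h
    have hht : ht t1 = ht t2 := by
      have := hhs t1; rw [h, hhs t2] at this
      exact (Order.succ_injective (by simpa using this)).symm
    have h1 : t1 < s t2 := h ▸ hs t1
    exact le_antisymm (cmp _ _ _ h1 (hs t2) hht.le) (cmp _ _ _ (hs t2) h1 hht.ge)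
  have uinj : Function.Injective u := by
    intro t1 t2 h
    have hht : ht t1 = ht t2 := by
      have := hhu t1; rw [h, hhu t2] at this
      exact (Order.succ_injective (by simpa using this)).symm
    have h1 : t1 < u t2 := h ▸ hu t1
    exact le_antisymm (cmp _ _ _ h1 (hu t2) hht.le) (cmp _ _ _ (hu t2) h1 hht.ge)
  set f : α → α × α := fun t => (s t, u t) with hf
  have finj : Function.Injective f := fun t1 t2 h => sinj (congrArg Prod.fst h)
  refine ⟨Set.range f, ?_, ?_, ?_⟩
  · rintro p ⟨t, rfl⟩
    simp only [hf]
    rw [hhs, hhu]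
  · -- antichain
    have key : ∀ t1 t2 : α, t1 ≠ t2 → ¬ f t1 ≤ f t2 := by
      intro t1 t2 hne12 hle
      obtain ⟨hle1, hle2⟩ := Prod.le_def.1 hle
      simp only [hf] at hle1 hle2
      have hs12 : s t1 < s t2 := lt_of_le_of_ne hle1 (fun h => hne12 (sinj h))
      have hu12 : u t1 < u t2 := lt_of_le_of_ne hle2 (fun h => hne12 (uinj h))
      have hhtlt : ht t1 < ht t2 := by
        have := hT.ht_lt _ _ hs12
        rw [hhs t1, hhs t2] at this
        simpa using this
      have h1 : ht (s t1) ≤ ht t2 := by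
        rw [hhs t1]; exact Order.add_one_le_iff.2 hhtlt
      have h2 : ht (u t1) ≤ ht t2 := by
        rw [hhu t1]; exact Order.add_one_le_iff.2 hhtlt
      -- s t1 ≤ t2 and u t1 ≤ t2
      have hst2 : s t1 ≤ t2 := cmp _ _ _ hs12 (hs t2) h1
      have hut2 : u t1 ≤ t2 := cmp _ _ _ hu12 (hu t2) h2
      -- both s t1, u t1 below s t2
      have hx : s t1 < s t2 := hs12
      have hy : u t1 < s t2 := lt_of_le_of_lt hut2 (hs t2)
      rcases hT.pred_chain (s t2) hx hy (hne t1) with h | h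
      · have := hT.ht_lt _ _ h; rw [hhs t1, hhu t1] at this; exact lt_irrefl _ this
      · have := hT.ht_lt _ _ h; rw [hhs t1, hhu t1] at this; exact lt_irrefl _ this
    rintro p ⟨t1, rfl⟩ q ⟨t2, rfl⟩ hpq hle
    exact key t1 t2 (fun h => hpq (congrArg f h)) hle
  · -- uncountable
    intro hc
    have hαc : (Set.univ : Set α).Countable := by
      simpa using hc.preimage finj
    have hrc : (Set.range ht).Countable := by
      simpa using hαc.image ht
    have hIc : (Set.Iio ((Cardinal.aleph 1).ord)).Countable := by
      refine hrc.mono ?_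
      intro β hβ
      obtain ⟨t, ht'⟩ := honto β hβ
      exact ⟨t, ht'⟩
    have : #(Set.Iio ((Cardinal.aleph 1).ord)) ≤ ℵ₀ := by
      rw [Cardinal.mk_le_aleph0_iff]
      exact Set.countable_coe_iff.2 hIc
    rw [Ordinal.mk_Iio_ordinal, Cardinal.card_ord] at this
    exact absurd this (not_le.2 (Cardinal.aleph0_lt_lift.mpr
      Cardinal.aleph0_lt_aleph_one))
end

section
/- Let T be a normal Souslin tree and suppose T is 2-free, i.e., for any two distinct nodes s, t of the same height the tree product T(s) ⊗ T(t) satisfies the countable chain condition. Then T is totally rigid: for all pairs of distinct nodes s, t of T of the same height, the trees T(s) and T(t) are not isomorphic. -/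
open Cardinal Ordinal Set

universe u

variable {α : Type u}

section Aux

variable [PartialOrder α] {ht : α → Ordinal}

lemma aux_le_of_ht_le (hT : IsTreeHt ht) {u v w : α} (hu : u < w) (hv : v < w)
    (h : ht u ≤ ht v) : u ≤ v := by
  rcases eq_or_ne u v with rfl | hne
  · exact le_rfl
  · rcases hT.pred_chain w hu hv hne with h' | h'
    · exact h'.le
    · exact absurd (hT.ht_lt _ _ h') (not_lt.mpr h)

lemma aux_eq_of_le (hT : IsTreeHt ht) {u v w : α} (hu : u ≤ w) (hv : v ≤ w)
    (h : ht u = ht v) : u = v := by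
  rcases hu.lt_or_eq with hu' | rfl
  · rcases hv.lt_or_eq with hv' | rfl
    · exact le_antisymm (aux_le_of_ht_le hT hu' hv' h.le) (aux_le_of_ht_le hT hv' hu' h.ge)
    · exact absurd (hT.ht_lt _ _ hu') (not_lt.mpr h.ge)
  · rcases hv.lt_or_eq with hv' | rfl
    · exact absurd (hT.ht_lt _ _ hv') (not_lt.mpr h.le)
    · rfl

lemma aux_ht_iso (hT : IsTreeHt ht) {s t : α} (hst : ht s = ht t)
    (f : {x : α // s ≤ x} ≃o {x : α // t ≤ x}) :
    ∀ x : {x : α // s ≤ x}, ht (f x : α) = ht (x : α) := by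
  suffices H : ∀ o : Ordinal, ∀ x : {x : α // s ≤ x}, ht (x : α) = o → ht (f x : α) = o by
    intro x; exact H _ x rfl
  intro o
  induction o using Ordinal.induction with
  | h o IH =>
  intro x hxo
  have hty : t ≤ (f x : α) := (f x).2
  have hts : ht s ≤ o := by
    rcases x.2.lt_or_eq with h | h
    · exact hxo ▸ (hT.ht_lt _ _ h).le
    · rw [← hxo, ← h]
  have h1 : ht (f x : α) ≤ o := by
    by_contra hc
    push_neg at hc
    obtain ⟨z, hzy, hz⟩ := hT.ht_onto (f x : α) o hc
    have hty' : t < (f x : α) := by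
      rcases hty.lt_or_eq with h | h
      · exact h
      · exact absurd (h ▸ hc) (not_lt.mpr (hst ▸ hts))
    have htz : t ≤ z := aux_le_of_ht_le hT hty' hzy (by rw [hz, ← hst]; exact hts)
    have hwx : f.symm ⟨z, htz⟩ < x := by
      have : (⟨z, htz⟩ : {x : α // t ≤ x}) < f x := Subtype.coe_lt_coe.mp hzy
      simpa using f.symm.lt_iff_lt.mpr this
    have hwo : ht (f.symm ⟨z, htz⟩ : α) < o := hxo ▸ hT.ht_lt _ _ (Subtype.coe_lt_coe.mpr hwx)
    have heq := IH _ hwo (f.symm ⟨z, htz⟩) rfl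
    rw [show f (f.symm ⟨z, htz⟩) = ⟨z, htz⟩ from f.apply_symm_apply _] at heq
    exact absurd hwo (by rw [← heq, hz]; exact lt_irrefl o |>.elim)
  have h2 : o ≤ ht (f x : α) := by
    by_contra hc
    push_neg at hc
    have h0 : ht s ≤ ht (f x : α) := by
      rw [hst]
      rcases hty.lt_or_eq with h | h
      · exact (hT.ht_lt _ _ h).le
      · exact (congrArg ht h).le
    have hsx : s < (x : α) := by
      rcases x.2.lt_or_eq with h | h
      · exact h
      · exfalso
        have hlt' : ht (f x : α) < ht s := by rw [congrArg ht h, hxo]; exact hc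
        exact absurd h0 (not_le.mpr hlt')
    obtain ⟨z, hzx, hz⟩ := hT.ht_onto (x : α) (ht (f x : α)) (hxo ▸ hc)
    have hsz : s ≤ z := aux_le_of_ht_le hT hsx hzx (hz ▸ h0)
    have hlt : f ⟨z, hsz⟩ < f x := f.lt_iff_lt.mpr (Subtype.coe_lt_coe.mp hzx)
    have h3 := IH (ht z) (hxo ▸ hT.ht_lt _ _ hzx) ⟨z, hsz⟩ rfl
    have h4 := hT.ht_lt _ _ (Subtype.coe_lt_coe.mpr hlt)
    rw [h3, hz] at h4
    exact lt_irrefl _ h4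
  exact le_antisymm h1 h2

end Aux

universe v

lemma aux_no_countable_subtree {α : Type u} [PartialOrder α] {ht : α → Ordinal.{v}} {s : α}
    (hlev : ∀ β, β < (Cardinal.aleph 1).ord → ∃ u : α, ht u = β)
    (hext : ∀ t : α, ∀ β, ht t < β → (∃ u : α, ht u = β) → ∃ x, t < x ∧ ht x = β)
    (hlts : ht s < (Cardinal.aleph 1).ord)
    (hcnt : Countable {x : α // s ≤ x}) : False := by
  letI iwo : IsWellOrder ((Cardinal.aleph 1 : Cardinal.{v}).ord).ToType (· < ·) := isWellOrder_lt
  set ti : ((Cardinal.aleph 1 : Cardinal.{v}).ord).ToType → Ordinal.{v} :=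
    fun i => @Ordinal.typein _ (· < ·) iwo i with hti
  have htilt : ∀ i, ti i < (Cardinal.aleph 1 : Cardinal.{v}).ord := by
    intro i
    have := @Ordinal.typein_lt_type _ (· < ·) iwo i
    rwa [Ordinal.type_toType] at this
  have hnode : ∀ i : ((Cardinal.aleph 1 : Cardinal.{v}).ord).ToType,
      ∃ x : {x : α // s ≤ x}, ht (x : α) = ht s + 1 + ti i := by
    intro i
    have hβ : ht s + 1 + ti i < (Cardinal.aleph 1 : Cardinal.{v}).ord := by
      rw [Cardinal.lt_ord, Ordinal.card_add, Ordinal.card_add]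
      have hc1 : (ht s).card ≤ ℵ₀ := by
        have := Cardinal.lt_ord.mp hlts
        rwa [← Cardinal.succ_aleph0, Order.lt_succ_iff] at this
      have hc2 : (ti i).card ≤ ℵ₀ := by
        have := Cardinal.lt_ord.mp (htilt i)
        rwa [← Cardinal.succ_aleph0, Order.lt_succ_iff] at this
      calc (ht s).card + (1 : Ordinal).card + (ti i).card
          ≤ ℵ₀ + ℵ₀ + ℵ₀ := by
            refine add_le_add (add_le_add hc1 ?_) hc2
            simp [Cardinal.one_le_aleph0]
        _ = ℵ₀ := by rw [Cardinal.aleph0_add_aleph0, Cardinal.aleph0_add_aleph0]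
        _ < Cardinal.aleph 1 := Cardinal.aleph0_lt_aleph_one
    have hgt : ht s < ht s + 1 + ti i := by
      calc ht s < ht s + 1 := by
            rw [Ordinal.add_one_eq_succ]; exact Order.lt_succ _
        _ ≤ ht s + 1 + ti i := le_self_add
    obtain ⟨u, hu⟩ := hlev _ hβ
    obtain ⟨xi, hxi, hhtxi⟩ := hext s _ hgt ⟨u, hu⟩
    exact ⟨⟨xi, hxi.le⟩, hhtxi⟩
  choose F hF using hnode
  have hFinj : Function.Injective F := by
    intro i j h
    have hh := hF i
    rw [h, hF j] at hh
    exact @Ordinal.typein_injective _ (· < ·) iwo _ _ (add_left_cancel_iff.mp hh.symm)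
  have : Countable ((Cardinal.aleph 1 : Cardinal.{v}).ord).ToType := hFinj.countable
  have hle : (Cardinal.aleph 1 : Cardinal.{v}) ≤ ℵ₀ := by
    rw [← Cardinal.mk_ord_toType (Cardinal.aleph 1 : Cardinal.{v})]
    exact Cardinal.mk_le_aleph0
  exact absurd hle (not_le.mpr Cardinal.aleph0_lt_aleph_one)

/-- A 2-free normal Souslin tree is totally rigid: subtrees above distinct nodes of the
same height are never isomorphic. -/
theorem two_free_implies_totally_rigid [PartialOrder α] (ht : α → Ordinal)
    (hS : IsSouslinTree ht) (hN : IsNormalTree ht) (hA : Aleph0Splitting ht)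
    (h2free : ∀ s t : α, ht s = ht t → s ≠ t →
      ∀ A : Set (α × α), (∀ p ∈ A, s ≤ p.1 ∧ t ≤ p.2 ∧ ht p.1 = ht p.2) →
        IsAntichain (· ≤ ·) A → A.Countable) :
    ∀ s t : α, ht s = ht t → s ≠ t →
      IsEmpty ({x : α // s ≤ x} ≃o {x : α // t ≤ x}) := by
  intro s t hst hne
  constructor
  intro f
  obtain ⟨hT, hlt, hlev, -, -⟩ := hS
  obtain ⟨-, hsucc, hext, -⟩ := hN
  choose a b ha hb hab hta htb using hsucc
  have hfht := aux_ht_iso hT hst f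
  set g : {x : α // s ≤ x} → α × α :=
    fun x => (a (x : α), (f ⟨b (x : α), x.2.trans (hb (x : α)).le⟩ : α)) with hg
  have hgfst : ∀ x, ht (g x).1 = ht (x : α) + 1 := fun x => hta _
  have hgsnd : ∀ x, ht (g x).2 = ht (x : α) + 1 := by
    intro x
    show ht (f ⟨b (x : α), _⟩ : α) = _
    rw [hfht]
    exact htb _
  have hsucc_inj : ∀ o₁ o₂ : Ordinal, o₁ + 1 = o₂ + 1 → o₁ = o₂ := by
    intro o₁ o₂ h
    rwa [Ordinal.add_one_eq_succ, Ordinal.add_one_eq_succ, Order.succ_eq_succ_iff] at h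
  have hsucc_lt : ∀ o₁ o₂ : Ordinal, o₁ + 1 < o₂ + 1 → o₁ < o₂ := by
    intro o₁ o₂ h
    rwa [Ordinal.add_one_eq_succ, Ordinal.add_one_eq_succ, Order.succ_lt_succ_iff] at h
  have hcond : ∀ p ∈ Set.range g, s ≤ p.1 ∧ t ≤ p.2 ∧ ht p.1 = ht p.2 := by
    rintro p ⟨x, rfl⟩
    exact ⟨x.2.trans (ha _).le, (f _).2, by rw [hgfst, hgsnd]⟩
  have hAC : IsAntichain (· ≤ ·) (Set.range g) := by
    rintro p ⟨x, rfl⟩ q ⟨x', rfl⟩ hpq hle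
    have h1 : a (x : α) ≤ a (x' : α) := hle.1
    have h2 : b (x : α) ≤ b (x' : α) := by
      have := f.le_iff_le.mp (Subtype.coe_le_coe.mp hle.2)
      exact Subtype.coe_le_coe.mpr this
    have haa : a (x : α) ≠ a (x' : α) := by
      intro h
      apply hpq
      have hxx : (x : α) = (x' : α) := by
        refine aux_eq_of_le hT (h ▸ (ha (x : α)).le) (ha (x' : α)).le ?_
        exact hsucc_inj _ _ (by rw [← hta, ← hta, h])
      rw [hg]
      exact congrArg g (Subtype.ext hxx)
    have haa' : a (x : α) < a (x' : α) := h1.lt_of_ne haa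
    have hbb : b (x : α) ≠ b (x' : α) := by
      intro h
      apply hpq
      have hxx : (x : α) = (x' : α) := by
        refine aux_eq_of_le hT (h ▸ (hb (x : α)).le) (hb (x' : α)).le ?_
        exact hsucc_inj _ _ (by rw [← htb, ← htb, h])
      rw [hg]
      exact congrArg g (Subtype.ext hxx)
    have hbb' : b (x : α) < b (x' : α) := h2.lt_of_ne hbb
    have hxy : ht (x : α) < ht (x' : α) := by
      have := hT.ht_lt _ _ haa'
      rw [hta, hta] at this
      exact hsucc_lt _ _ this
    have hle1 : ht (a (x : α)) ≤ ht (x' : α) := by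
      rw [hta, Ordinal.add_one_eq_succ]
      exact Order.succ_le_of_lt hxy
    have hle2 : ht (b (x : α)) ≤ ht (x' : α) := by
      rw [htb, Ordinal.add_one_eq_succ]
      exact Order.succ_le_of_lt hxy
    have hax : a (x : α) ≤ (x' : α) := aux_le_of_ht_le hT haa' (ha _) hle1
    have hbx : b (x : α) ≤ (x' : α) := aux_le_of_ht_le hT hbb' (hb _) hle2
    exact hab (x : α) (aux_eq_of_le hT hax hbx (by rw [hta, htb]))
  have hcnt : (Set.range g).Countable := h2free s t hst hne _ hcond hAC
  have hsub : Countable (Set.range g) := hcnt.to_subtype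
  have hginj : Function.Injective g := by
    intro x x' h
    have h1 : a (x : α) = a (x' : α) := congrArg Prod.fst h
    have hh : ht (x : α) = ht (x' : α) :=
      hsucc_inj _ _ (by rw [← hta, ← hta, h1])
    exact Subtype.ext (aux_eq_of_le hT (h1 ▸ (ha (x : α)).le) (ha (x' : α)).le hh)
  have hdomcnt : Countable {x : α // s ≤ x} :=
    Countable.of_equiv _ (Equiv.ofInjective g hginj).symm
  exact (aux_no_countable_subtree hlev hext (hlt s) hdomcnt).elim
end

section
/- Every free normal Souslin tree is rigid, i.e., it admits no nontrivial automorphism. -/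
open Cardinal Ordinal Set

universe u

variable {α : Type u}

/-- The product of the subtrees above the (distinct, same-height) nodes `P i` is c.c.c. -/
def NFree [PartialOrder α] (ht : α → Ordinal) (n : ℕ) : Prop :=
  ∀ P : Fin n → α, Function.Injective P → (∀ i j, ht (P i) = ht (P j)) →
    ∀ A : Set (Fin n → α),
      (∀ f ∈ A, (∀ i, P i ≤ f i) ∧ ∀ i j, ht (f i) = ht (f j)) →
      IsAntichain (· ≤ ·) A → A.Countable

theorem auto_preserves_ht [PartialOrder α] {ht : α → Ordinal} (hT : IsTreeHt ht)
    (f : α ≃o α) : ∀ t : α, ht (f t) = ht t := by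
  have key : ∀ o : Ordinal, ∀ t : α, ht t = o → ht (f t) = o := by
    intro o
    induction o using Ordinal.induction with
    | h o IH =>
      intro t hto
      rcases lt_trichotomy (ht (f t)) o with h | h | h
      · exfalso
        obtain ⟨s, hs, hhs⟩ := hT.ht_onto t (ht (f t)) (hto ▸ h)
        have hfs : f s < f t := f.lt_iff_lt.2 hs
        have := hT.ht_lt _ _ hfs
        have h2 : ht (f s) = ht s := IH (ht s) (hhs ▸ h) s rfl
        rw [h2, hhs] at this
        exact lt_irrefl _ this
      · exact h
      · exfalso
        obtain ⟨s, hs, hhs⟩ := hT.ht_onto (f t) o h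
        have hs' : f.symm s < t := by
          have := f.symm.lt_iff_lt.2 hs
          simpa using this
        have h1 : ht (f.symm s) < o := hto ▸ hT.ht_lt _ _ hs'
        have h2 : ht (f (f.symm s)) = ht (f.symm s) := IH _ h1 _ rfl
        rw [f.apply_symm_apply] at h2
        rw [hhs] at h2
        rw [← h2] at h1
        exact lt_irrefl o h1
  exact fun t => key (ht t) t rfl

theorem omega1_add_lt : ∀ a b : Ordinal.{u}, a < (Cardinal.aleph 1).ord →
    b < (Cardinal.aleph 1).ord → a + b < (Cardinal.aleph 1).ord := by
  intro a b ha hb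
  rw [Cardinal.lt_ord] at ha hb ⊢
  rw [Ordinal.card_add]
  exact Cardinal.add_lt_of_lt (Cardinal.aleph0_le_aleph 1) ha hb

theorem omega1_one_lt : (1 : Ordinal.{u}) < (Cardinal.aleph 1).ord := by
  rw [Cardinal.lt_ord]
  simpa using Cardinal.one_lt_aleph0.trans (Cardinal.aleph0_lt_aleph_one)

/-- Every free normal Souslin tree is rigid. -/
theorem free_implies_rigid [PartialOrder α] (ht : α → Ordinal)
    (hS : IsSouslinTree ht) (hN : IsNormalTree ht)
    (hfree : ∀ n : ℕ, NFree ht (n + 1)) :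
    ∀ f : α ≃o α, ∀ x : α, f x = x := by
  intro f x
  by_contra hne
  obtain ⟨hT, hbd, hlev, hanti, hch⟩ := hS
  have hht := auto_preserves_ht hT f
  set y := f x with hy
  have hxy : ht y = ht x := hht x
  have hxney : x ≠ y := fun h => hne h.symm
  set Om := (Cardinal.aleph 1).ord with hOm
  -- existence of a splitting node above x at each level ht x + 1 + δ
  have hex : ∀ δ : (Set.Iio Om), ∃ a : α, ∃ b : α, ∃ z : α,
      a ≠ b ∧ x ≤ z ∧ z < a ∧ z < b ∧ ht z = ht x + 1 + δ.1 ∧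
      ht a = ht z + 1 ∧ ht b = ht z + 1 := by
    rintro ⟨δ, hδ⟩
    have hlt : ht x + 1 + δ < Om := omega1_add_lt _ _ (omega1_add_lt _ _ (hbd x) omega1_one_lt) hδ
    have hgt : ht x < ht x + 1 + δ :=
      lt_of_lt_of_le (lt_add_one _) le_self_add
    obtain ⟨z, hxz, hz⟩ := hN.2.2.1 x _ hgt (hlev _ hlt)
    obtain ⟨a, b, hza, hzb, hab, ha, hb⟩ := hN.2.1 z
    exact ⟨a, b, z, hab, le_of_lt hxz, hza, hzb, hz, ha, hb⟩
  choose a b z hab hxz hza hzb hz ha hb using hex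
  -- heights of the chosen nodes
  have hta : ∀ δ, ht (a δ) = ht x + 1 + δ.1 + 1 := fun δ => by rw [ha δ, hz δ]
  have htb : ∀ δ, ht (b δ) = ht x + 1 + δ.1 + 1 := fun δ => by rw [hb δ, hz δ]
  -- the candidate antichain
  set G : (Set.Iio Om) → (Fin 2 → α) := fun δ => ![a δ, f (b δ)] with hG
  -- key comparison lemma
  have hkey : ∀ δ ε : (Set.Iio Om), a δ ≤ a ε → b δ ≤ b ε → δ = ε := by
    intro δ ε haa hbb
    by_contra hde
    have hde' : δ.1 ≠ ε.1 := fun h => hde (Subtype.ext h)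
    have haa' : a δ < a ε := by
      rcases lt_or_eq_of_le haa with h | h
      · exact h
      · exfalso
        apply hde'
        have := hta δ
        rw [h, hta ε] at this
        have h2 := this.symm
        simp only [Ordinal.add_one_eq_succ, Order.succ_eq_succ_iff] at h2
        exact (add_right_inj _).1 h2
    have hlta : ht (a δ) < ht (a ε) := hT.ht_lt _ _ haa'
    have hdlt : δ.1 < ε.1 := by
      rw [hta δ, hta ε] at hlta
      have h1 : ht x + 1 + δ.1 < ht x + 1 + ε.1 := lt_of_add_lt_add_right hlta
      exact lt_of_add_lt_add_left h1
    have hle : ht (a δ) ≤ ht (z ε) := by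
      rw [hta δ, hz ε]
      rw [Order.add_one_le_iff]
      exact add_lt_add_right hdlt _
    have key2 : ∀ w v : α, w < v → z ε < v → ht w ≤ ht (z ε) → w ≤ z ε := by
      intro w v hwv hzv hwh
      rcases eq_or_ne w (z ε) with h | h
      · exact le_of_eq h
      rcases hT.pred_chain v hwv hzv h with h2 | h2
      · exact le_of_lt h2
      · exact absurd (hT.ht_lt _ _ h2) (not_lt.2 hwh)
    have hltb : ht (b δ) < ht (b ε) := by
      rw [htb δ, htb ε]
      simp only [Ordinal.add_one_eq_succ]
      exact Order.succ_lt_succ (add_lt_add_right hdlt _)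
    have hbb' : b δ < b ε := lt_of_le_of_ne hbb (fun h => absurd (h ▸ hltb) (lt_irrefl _))
    have hleb : ht (b δ) ≤ ht (z ε) := by
      rw [htb δ, hz ε, Order.add_one_le_iff]
      exact add_lt_add_right hdlt _
    have hba : b δ < a ε := lt_of_le_of_lt (key2 _ _ hbb' (hzb ε) hleb) (hza ε)
    rcases hT.pred_chain (a ε) haa' hba (hab δ) with h2 | h2
    · have := hT.ht_lt _ _ h2
      rw [hta δ, htb δ] at this
      exact lt_irrefl _ this
    · have := hT.ht_lt _ _ h2
      rw [hta δ, htb δ] at this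
      exact lt_irrefl _ this
  -- apply freeness to the pair (x, y)
  have hPinj : Function.Injective (![x, y] : Fin 2 → α) := by
    intro i j hij
    fin_cases i <;> fin_cases j <;> simp_all
  have hPht : ∀ i j : Fin 2, ht ((![x, y] : Fin 2 → α) i) = ht ((![x, y] : Fin 2 → α) j) := by
    intro i j
    fin_cases i <;> fin_cases j <;> simp [hxy]
  have hA : ∀ g ∈ Set.range G, (∀ i, (![x, y] : Fin 2 → α) i ≤ g i) ∧
      ∀ i j, ht (g i) = ht (g j) := by
    rintro g ⟨δ, rfl⟩
    constructor
    · intro i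
      fin_cases i
      · simpa [hG] using le_of_lt (lt_of_le_of_lt (hxz δ) (hza δ))
      · have h1 : x ≤ b δ := le_of_lt (lt_of_le_of_lt (hxz δ) (hzb δ))
        simpa [hG, hy] using f.le_iff_le.2 h1
    · intro i j
      fin_cases i <;> fin_cases j <;> simp [hG, hht, hta, htb]
  have hanti2 : IsAntichain (· ≤ ·) (Set.range G) := by
    rintro g ⟨δ, rfl⟩ g' ⟨ε, rfl⟩ hne2 hle2
    apply hne2
    have h0 : a δ ≤ a ε := by simpa [hG] using hle2 0
    have h1 : b δ ≤ b ε := by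
      have h2 : f (b δ) ≤ f (b ε) := by simpa [hG] using hle2 1
      exact f.le_iff_le.1 h2
    exact congrArg G (hkey δ ε h0 h1)
  have hAC : (Set.range G).Countable := hfree 1 ![x, y] hPinj hPht _ hA hanti2
  -- but the range of G is uncountable
  have hGinj : Function.Injective G := by
    intro δ ε h
    have h0 : a δ = a ε := by
      have := congrFun h 0
      simpa [hG] using this
    have h1 : b δ = b ε := by
      have := congrFun h 1
      simp only [hG, Matrix.cons_val_one, Matrix.head_cons] at this
      exact f.injective this
    exact hkey δ ε (le_of_eq h0) (le_of_eq h1)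
  have hcnt : Countable (Set.Iio Om) := by
    have h1 : Countable (Set.range G) := hAC.to_subtype
    exact Function.Injective.countable
      (f := fun δ : Set.Iio Om => (⟨G δ, Set.mem_range_self δ⟩ : Set.range G))
      (fun δ ε h => hGinj (Subtype.ext_iff.1 h))
  have hmk : #(Set.Iio Om) ≤ ℵ₀ := Cardinal.mk_le_aleph0
  rw [Ordinal.mk_Iio_ordinal, hOm, Cardinal.card_ord] at hmk
  rw [Cardinal.lift_le_aleph0] at hmk
  exact absurd hmk (not_le.2 Cardinal.aleph0_lt_aleph_one)
end

section
/- Let T be a homogeneous normal Souslin tree with at least two nodes at some level. Then T is not 2-free: there exist distinct nodes s, t of the same height such that T(s) ⊗ T(t) has an uncountable antichain. -/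
open Cardinal Ordinal Set

universe u

variable {α : Type u}

namespace IsTreeHt

universe v

variable [PartialOrder α] {ht : α → Ordinal.{v}} (hT : IsTreeHt ht)

include hT

theorem ht_mono' {a b : α} (h : a ≤ b) : ht a ≤ ht b := by
  rcases h.lt_or_eq with h | h
  · exact (hT.ht_lt _ _ h).le
  · exact h ▸ le_rfl

/-- If `a ≤ c`, `b < c` and `ht a ≤ ht b`, then `a ≤ b`. -/
theorem le_of_ht_le' {a b c : α} (hac : a ≤ c) (hbc : b < c) (hab : ht a ≤ ht b) :
    a ≤ b := by
  rcases hac.lt_or_eq with hac | rfl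
  · rcases eq_or_ne a b with rfl | hne
    · exact le_rfl
    · rcases hT.pred_chain c hac hbc hne with h | h
      · exact h.le
      · exact absurd (hT.ht_lt _ _ h) (not_lt.mpr hab)
  · exact absurd (hT.ht_lt _ _ hbc) (not_lt.mpr hab)

theorem eq_of_ht_eq' {a b c : α} (hac : a ≤ c) (hbc : b ≤ c) (hab : ht a = ht b) :
    a = b := by
  have hab' : a ≤ b := by
    rcases hbc.lt_or_eq with h | rfl
    · exact hT.le_of_ht_le' hac h hab.le
    · exact hac
  rcases hab'.lt_or_eq with h | h
  · exact absurd (hT.ht_lt _ _ h) (by simp [hab])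
  · exact h

/-- An order isomorphism between the cones above two nodes of equal height preserves
heights. -/
theorem ht_iso {s t : α} (hst : ht s = ht t)
    (φ : {x : α // s ≤ x} ≃o {x : α // t ≤ x}) (x : {x : α // s ≤ x}) :
    ht (φ x : α) = ht (x : α) := by
  suffices H : ∀ β : Ordinal, ∀ x : {x : α // s ≤ x}, ht (x : α) = β → ht (φ x : α) = β from
    H _ x rfl
  intro β
  induction β using Ordinal.induction with
  | h β IH =>
    intro x hx
    have hts : ht t ≤ ht (φ x : α) := hT.ht_mono' (φ x).2
    have hsx : ht s ≤ β := hx ▸ hT.ht_mono' x.2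
    apply le_antisymm
    · by_contra hgt
      push_neg at hgt
      obtain ⟨u, hu_lt, hu⟩ := hT.ht_onto (φ x : α) β hgt
      have htu : t ≤ u := by
        refine hT.le_of_ht_le' (φ x).2 hu_lt ?_
        rw [hu, ← hst]
        exact hsx
      have huφ : (⟨u, htu⟩ : {x : α // t ≤ x}) < φ x := Subtype.mk_lt_mk.mpr hu_lt
      have hv : φ.symm ⟨u, htu⟩ < x := by
        have := φ.symm.strictMono huφ
        rwa [φ.symm_apply_apply] at this
      have hvβ : ht ((φ.symm ⟨u, htu⟩ : {x : α // s ≤ x}) : α) < β := by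
        rw [← hx]; exact hT.ht_lt _ _ (Subtype.coe_lt_coe.mpr hv)
      have := IH _ hvβ (φ.symm ⟨u, htu⟩) rfl
      rw [φ.apply_symm_apply] at this
      rw [hu] at this
      exact absurd (this ▸ hvβ) (lt_irrefl β)
    · by_contra hlt
      push_neg at hlt
      set β' := ht (φ x : α) with hβ'
      have hsβ' : ht s ≤ β' := hst ▸ hts
      obtain ⟨y, hyx, hy⟩ := hT.ht_onto (x : α) β' (hx ▸ hlt)
      have hsy : s ≤ y := hT.le_of_ht_le' x.2 hyx (hy ▸ hsβ')
      have hylt : (⟨y, hsy⟩ : {x : α // s ≤ x}) < x := Subtype.mk_lt_mk.mpr hyx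
      have := IH β' hlt ⟨y, hsy⟩ hy
      have h2 : ht ((φ ⟨y, hsy⟩ : {x : α // t ≤ x}) : α) < β' :=
        hT.ht_lt _ _ (Subtype.coe_lt_coe.mpr (φ.strictMono hylt))
      rw [this] at h2
      exact lt_irrefl _ h2

end IsTreeHt

/-- A homogeneous normal Souslin tree with at least two nodes at some level is not
2-free. -/
theorem homogeneous_not_two_free [PartialOrder α] (ht : α → Ordinal)
    (hS : IsSouslinTree ht) (hN : IsNormalTree ht) (hA : Aleph0Splitting ht)
    (hhom : ∀ s t : α, ht s = ht t →
      Nonempty ({x : α // s ≤ x} ≃o {x : α // t ≤ x}))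
    (htwo : ∃ s t : α, ht s = ht t ∧ s ≠ t) :
    ∃ s t : α, s ≠ t ∧ ht s = ht t ∧
      ∃ A : Set (α × α), (∀ p ∈ A, s ≤ p.1 ∧ t ≤ p.2 ∧ ht p.1 = ht p.2) ∧
        IsAntichain (· ≤ ·) A ∧ ¬ A.Countable := by
  obtain ⟨s, t, hst, hne⟩ := htwo
  obtain ⟨hT, hht, hlev, hanti, -⟩ := hS
  have φ := (hhom s t hst).some
  refine ⟨s, t, hne, hst, ?_⟩
  -- choose, for each countable ordinal β above ht s, a node above s of height β together
  -- with two distinct immediate successors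
  have H : ∀ β : Set.Ioo (ht s) ((Cardinal.aleph 1).ord),
      ∃ x x' x'' : α, s < x ∧ ht x = (β : Ordinal) ∧ x < x' ∧ x < x'' ∧ x' ≠ x'' ∧
        ht x' = (β : Ordinal) + 1 ∧ ht x'' = (β : Ordinal) + 1 := by
    rintro ⟨β, h1, h2⟩
    obtain ⟨x, hsx, hxβ⟩ := hN.2.2.1 s β h1 (hlev β h2)
    obtain ⟨x', x'', h3, h4, h5, h6, h7⟩ := hN.2.1 x
    exact ⟨x, x', x'', hsx, hxβ, h3, h4, h5, by rw [h6, hxβ], by rw [h7, hxβ]⟩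
  choose x x' x'' hsx hxβ hxx' hxx'' hne' hx' hx'' using H
  have hsx'' : ∀ β, s ≤ x'' β := fun β => ((hsx β).trans (hxx'' β)).le
  set q : Set.Ioo (ht s) ((Cardinal.aleph 1).ord) → α :=
    fun β => (φ ⟨x'' β, hsx'' β⟩ : α) with hq
  have htq : ∀ β, ht (q β) = (β : Ordinal) + 1 := fun β => by
    show ht ((φ ⟨x'' β, hsx'' β⟩ : {x : α // t ≤ x}) : α) = (β : Ordinal) + 1
    rw [hT.ht_iso hst φ ⟨x'' β, hsx'' β⟩]; exact hx'' β
  refine ⟨Set.range (fun β => (x' β, q β)), ?_, ?_, ?_⟩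
  · rintro p ⟨β, rfl⟩
    exact ⟨((hsx β).trans (hxx' β)).le, (φ ⟨x'' β, hsx'' β⟩).2, by rw [hx' β, htq β]⟩
  · rintro p ⟨β, rfl⟩ r ⟨γ, rfl⟩ hpr hle
    obtain ⟨hle1, hle2⟩ := Prod.mk_le_mk.mp hle
    -- β < γ
    have hβγ : (β : Ordinal) < γ := by
      have h1 : (β : Ordinal) + 1 ≤ (γ : Ordinal) + 1 := by
        rw [← hx' β, ← hx' γ]; exact hT.ht_mono' hle1
      rw [Ordinal.add_one_eq_succ, Ordinal.add_one_eq_succ, Order.succ_le_succ_iff] at h1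
      rcases h1.lt_or_eq with h | h
      · exact h
      · exfalso
        apply hpr
        have hbg : β = γ := Subtype.ext h
        rw [hbg]
    have hsucc : (β : Ordinal) + 1 ≤ (γ : Ordinal) := by
      rw [Ordinal.add_one_eq_succ, Order.succ_le_iff]; exact hβγ
    -- both x' β and x'' β lie below x γ
    have h1 : x' β ≤ x γ :=
      hT.le_of_ht_le' hle1 (hxx' γ) (by rw [hx' β, hxβ γ]; exact hsucc)
    have hle2' : x'' β ≤ x'' γ := by
      have : φ ⟨x'' β, hsx'' β⟩ ≤ φ ⟨x'' γ, hsx'' γ⟩ := Subtype.coe_le_coe.mp hle2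
      exact Subtype.coe_le_coe.mpr (φ.le_iff_le.mp this)
    have h2 : x'' β ≤ x γ :=
      hT.le_of_ht_le' hle2' (hxx'' γ) (by rw [hx'' β, hxβ γ]; exact hsucc)
    exact hne' β (hT.eq_of_ht_eq' h1 h2 (by rw [hx' β, hx'' β]))
  · intro hc
    have hinj : Function.Injective
        (fun β : Set.Ioo (ht s) ((Cardinal.aleph 1).ord) => (x' β, q β)) := by
      intro β γ h
      have h1 : x' β = x' γ := congrArg Prod.fst h
      have h2 : (β : Ordinal) + 1 = (γ : Ordinal) + 1 := by
        rw [← hx' β, ← hx' γ, h1]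
      rw [Ordinal.add_one_eq_succ, Ordinal.add_one_eq_succ] at h2
      exact Subtype.ext (Order.succ_injective h2)
    haveI := hc.to_subtype
    haveI : Countable (Set.Ioo (ht s) ((Cardinal.aleph 1).ord)) := by
      refine Function.Injective.countable
        (f := fun β : Set.Ioo (ht s) ((Cardinal.aleph 1).ord) =>
          (⟨(x' β, q β), Set.mem_range_self β⟩ :
            Set.range (fun β => (x' β, q β)))) ?_
      intro β γ h
      exact hinj (congrArg Subtype.val h)
    -- derive that Iio ω₁ is countable, contradiction
    have hIic : (Set.Iic (ht s)).Countable := by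
      have h1 : ht s + 1 < (Cardinal.aleph 1).ord := by
        rw [Ordinal.add_one_eq_succ]
        exact (Cardinal.isSuccLimit_ord (Cardinal.aleph0_le_aleph 1)).succ_lt (hht s)
      have h2 : Set.Iic (ht s) ⊆ Set.Iio (ht s + 1) := fun o ho =>
        Set.mem_Iio.mpr (lt_of_le_of_lt ho (lt_add_one _))
      refine Set.Countable.mono h2 ?_
      rw [← Set.countable_coe_iff]
      refine @Countable.of_equiv _ _ ?_ (Ordinal.ToType.mk (o := ht s + 1)).toEquiv.symm
      rw [← Cardinal.mk_le_aleph0_iff, Cardinal.mk_toType]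
      have h3 := Cardinal.lt_ord.mp h1
      rw [← Cardinal.succ_aleph0, Order.lt_succ_iff] at h3
      exact h3
    have hIio : (Set.Iio ((Cardinal.aleph 1).ord)).Countable := by
      have : Set.Iio ((Cardinal.aleph 1).ord) ⊆
          Set.Iic (ht s) ∪ Set.Ioo (ht s) ((Cardinal.aleph 1).ord) := by
        intro o ho
        rcases le_or_gt o (ht s) with h | h
        · exact Or.inl h
        · exact Or.inr ⟨h, ho⟩
      exact Set.Countable.mono this (hIic.union (Set.countable_coe_iff.mp ‹_›))
    haveI := hIio.to_subtype
    haveI : Countable ((Cardinal.aleph 1).ord).ToType :=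
      Countable.of_equiv _ (Ordinal.ToType.mk (o := _)).toEquiv
    have hfin : (Cardinal.aleph 1) ≤ ℵ₀ := by
      rw [← Cardinal.mk_ord_toType (Cardinal.aleph 1)]
      exact Cardinal.mk_le_aleph0
    exact absurd hfin (not_le.mpr Cardinal.aleph0_lt_aleph_one)
end

section
/- Let T be a normal ℵ₀-splitting tree and let ≡₀, …, ≡_{n-1} be nice tree equivalence relations on T such that for every level α and every choice of classes c_i ∈ (T/≡_i)_α (i < n), the intersection ⋂_{i<n} c_i is a singleton {t} with t ∈ T_α. Then the map t ↦ (t/≡_0, …, t/≡_{n-1}) is an isomorphism of trees between T and the tree product ⊗_{i<n} T/≡_i. -/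
open Cardinal Ordinal Set

universe u

variable {α : Type u}

/-- `E` is a nice tree equivalence relation on the tree `(α, ht)`: it respects levels, is
compatible with the tree order, is nice (equivalence lifts upwards), and the quotient is a
normal ℵ₀-splitting tree (each node has ℵ₀ many classes of immediate successors, and
classes at limit levels are determined by their predecessor classes). -/
structure IsNiceTER [PartialOrder α] (ht : α → Ordinal) (E : α → α → Prop) : Prop where
  equiv : Equivalence E
  levels : ∀ s t : α, E s t → ht s = ht t
  compat : ∀ s r t u : α, ht s = ht r → s < t → r < u → E t u → E s r
  nice : ∀ s r t : α, E s r → s < t → ∃ u : α, E t u ∧ r < u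
  quot_splits : ∀ t : α,
    {c : Set α | ∃ s, t < s ∧ ht s = ht t + 1 ∧ c = {u | E s u}}.Infinite ∧
    {c : Set α | ∃ s, t < s ∧ ht s = ht t + 1 ∧ c = {u | E s u}}.Countable
  quot_lim : ∀ s t : α, ht s = ht t → Order.IsSuccLimit (ht s) →
    (∀ r, r < s → ∃ r', r' < t ∧ E r r') → E s t

/-- If nice tree equivalence relations `E 0, …, E (n-1)` on a normal ℵ₀-splitting tree
are such that any choice of classes on a common level intersects in exactly one node,
then `t ↦ (t/E 0, …, t/E (n-1))` is an isomorphism of `T` with the tree product of the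
quotients: it is injective, surjective onto the product of the quotient levels, and both
it and its inverse preserve the order (the quotient order being the one induced on
classes). -/
theorem decomposition_into_quotients [PartialOrder α] (ht : α → Ordinal)
    (hT : IsTreeHt ht) (hN : IsNormalTree ht) (hA : Aleph0Splitting ht)
    (n : ℕ) (hn : 0 < n) (E : Fin n → α → α → Prop)
    (hE : ∀ i, IsNiceTER ht (E i))
    (hsing : ∀ c : Fin n → α, (∀ i j, ht (c i) = ht (c j)) →
      ∃! t : α, ∀ i, E i (c i) t) :
    (∀ s t : α, (∀ i, E i s t) → s = t) ∧
    (∀ c : Fin n → α, (∀ i j, ht (c i) = ht (c j)) → ∃ t : α, ∀ i, E i (c i) t) ∧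
    (∀ s t : α, s ≤ t ↔ ∀ i, ∃ s' t' : α, E i s s' ∧ E i t t' ∧ s' ≤ t') := by
  have part1 : ∀ s t : α, (∀ i, E i s t) → s = t := by
    intro s t h
    obtain ⟨u, _, huniq⟩ := hsing (fun _ => s) (fun _ _ => rfl)
    have hs : s = u := huniq s (fun i => (hE i).equiv.refl s)
    have ht' : t = u := huniq t h
    rw [hs, ht']
  refine ⟨part1, fun c hc => (hsing c hc).exists, fun s t => ⟨?_, ?_⟩⟩
  · intro hst i
    exact ⟨s, t, (hE i).equiv.refl s, (hE i).equiv.refl t, hst⟩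
  · intro h
    obtain ⟨s0, t0, hs0, ht0, hle0⟩ := h ⟨0, hn⟩
    have hhs : ht s = ht s0 := (hE _).levels _ _ hs0
    have hht : ht t = ht t0 := (hE _).levels _ _ ht0
    rcases eq_or_lt_of_le hle0 with heq | hlt
    · have hse : ht s = ht t := by rw [hhs, hht, heq]
      have hall : ∀ i, E i s t := by
        intro i
        obtain ⟨s', t', hs', ht', hle⟩ := h i
        have h1 : ht s' = ht t' := by
          rw [← (hE i).levels _ _ hs', ← (hE i).levels _ _ ht', hse]
        have hst' : s' = t' := by
          rcases eq_or_lt_of_le hle with h2 | h2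
          · exact h2
          · exact absurd (hT.ht_lt _ _ h2) (by rw [h1]; exact lt_irrefl _)
        exact (hE i).equiv.trans hs' (hst' ▸ (hE i).equiv.symm ht')
      exact le_of_eq (part1 s t hall)
    · have hlt' : ht s < ht t := by rw [hhs, hht]; exact hT.ht_lt _ _ hlt
      obtain ⟨u, hu, huht⟩ := hT.ht_onto t (ht s) hlt'
      have hall : ∀ i, E i s u := by
        intro i
        obtain ⟨s', t', hs', ht', hle⟩ := h i
        have h1 : ht u = ht s' := by rw [huht, (hE i).levels _ _ hs']
        have h2 : s' < t' := by
          rcases eq_or_lt_of_le hle with h2 | h2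
          · exfalso
            have e1 : ht s = ht s' := (hE i).levels _ _ hs'
            have e2 : ht t = ht t' := (hE i).levels _ _ ht'
            rw [h2] at e1
            rw [e1, ← e2] at hlt'
            exact lt_irrefl _ hlt'
          · exact h2
        have hus' : E i u s' := (hE i).compat u s' t t' h1 hu h2 ht'
        exact (hE i).equiv.trans hs' ((hE i).equiv.symm hus')
      rw [part1 s u hall]
      exact hu.le
end

section
/- Let T be a strongly homogeneous Souslin tree. Then the automorphism group of T has exactly 2^{ℵ₀} elements. -/
open Cardinal Ordinal Set

universe u

variable {α : Type u}

/-- A coherent family of isomorphisms `ψ s t : T(s) → T(t)` witnessing strong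
homogeneity: each `ψ s t` is a height-preserving order isomorphism of the subtrees above
`s` and `t`, `ψ s s` is the identity, the family is commutative, coherent and
transitive. -/
structure CoherentFam [PartialOrder α] (ht : α → Ordinal) (ψ : α → α → α → α) : Prop where
  maps : ∀ s t x : α, ht s = ht t → s ≤ x → t ≤ ψ s t x ∧ ht (ψ s t x) = ht x
  mono : ∀ s t x y : α, ht s = ht t → s ≤ x → s ≤ y → (x ≤ y ↔ ψ s t x ≤ ψ s t y)
  surj : ∀ s t z : α, ht s = ht t → t ≤ z → ∃ x : α, s ≤ x ∧ ψ s t x = z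
  refl : ∀ s x : α, s ≤ x → ψ s s x = x
  comm : ∀ r s t x : α, ht r = ht s → ht s = ht t → r ≤ x → ψ s t (ψ r s x) = ψ r t x
  coh : ∀ r s t x : α, ht r = ht s → r ≤ t → t ≤ x → ψ t (ψ r s t) x = ψ r s x
  trans : ∀ t u : α, ht t = ht u → Order.IsSuccLimit (ht t) →
    ∃ γ, γ < ht t ∧ ∀ r s : α, r ≤ t → s ≤ u → ht r = γ → ht s = γ → ψ r s t = u


universe v

namespace AutCard
variable [PartialOrder α] {ht : α → Ordinal.{v}}

theorem ht_mono (hT : IsTreeHt ht) {a b : α} (h : a ≤ b) : ht a ≤ ht b := by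
  rcases h.lt_or_eq with h | rfl
  · exact (hT.ht_lt _ _ h).le
  · rfl

theorem comp_of_le (hT : IsTreeHt ht) {a b c : α} (ha : a ≤ c) (hb : b ≤ c) :
    a ≤ b ∨ b ≤ a := by
  rcases ha.lt_or_eq with ha' | rfl
  · rcases hb.lt_or_eq with hb' | rfl
    · rcases eq_or_ne a b with rfl | hne
      · exact Or.inl le_rfl
      · rcases hT.pred_chain c ha' hb' hne with h | h
        · exact Or.inl h.le
        · exact Or.inr h.le
    · exact Or.inl ha'.le
  · exact Or.inr hb

theorem le_of_ht_le (hT : IsTreeHt ht) {a b c : α} (ha : a ≤ c) (hb : b ≤ c)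
    (h : ht a ≤ ht b) : a ≤ b := by
  rcases comp_of_le hT ha hb with h' | h'
  · exact h'
  · rcases h'.lt_or_eq with h'' | rfl
    · exact absurd (hT.ht_lt _ _ h'') (by simpa using h)
    · exact le_rfl

theorem eq_of_ht_eq (hT : IsTreeHt ht) {a b : α} (hab : a ≤ b) (h : ht a = ht b) : a = b := by
  rcases hab.lt_or_eq with h' | rfl
  · exact absurd (hT.ht_lt _ _ h') (by simp [h])
  · rfl

/-- the predecessor of `z` at height `b ≤ ht z` exists -/
theorem exists_pred (hT : IsTreeHt ht) {z : α} {b : Ordinal} (h : b ≤ ht z) :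
    ∃ s, s ≤ z ∧ ht s = b := by
  rcases h.lt_or_eq with h' | h'
  · obtain ⟨s, hs, hhs⟩ := hT.ht_onto z b h'
    exact ⟨s, hs.le, hhs⟩
  · exact ⟨z, le_rfl, h'.symm⟩

/-- an order automorphism preserves heights -/
theorem ht_map (hT : IsTreeHt ht) (σ : α ≃o α) (t : α) : ht (σ t) = ht t := by
  suffices H : ∀ β : Ordinal, ∀ t : α, ht t = β → ht (σ t) = β from H (ht t) t rfl
  intro β
  induction β using Ordinal.induction with
  | h β IH =>
    intro t htβ
    rcases lt_trichotomy (ht (σ t)) β with h | h | h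
    · exfalso
      obtain ⟨s, hs, hhs⟩ := hT.ht_onto t (ht (σ t)) (htβ ▸ h)
      have h1 : ht (σ s) = ht (σ t) := IH _ (hhs ▸ h) s hhs
      have h2 : σ s < σ t := by
        rw [OrderIso.lt_iff_lt]; exact hs
      exact absurd (hT.ht_lt _ _ h2) (by simp [h1])
    · exact h
    · exfalso
      obtain ⟨s', hs', hhs'⟩ := hT.ht_onto (σ t) β h
      set s := σ.symm s' with hsdef
      have hs'' : σ s = s' := σ.apply_symm_apply s'
      have hlt : s < t := by
        have := hs'
        rw [← hs''] at this
        rwa [OrderIso.lt_iff_lt] at this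
      have hhtlt : ht s < β := htβ ▸ hT.ht_lt _ _ hlt
      have := IH _ hhtlt s rfl
      rw [hs''] at this
      exact absurd hhs' (by rw [this]; exact hhtlt.ne)

/-- `σ` agrees with `ψ r (σ r)` at `z`. -/
def E (ψ : α → α → α → α) (σ : α ≃o α) (r z : α) : Prop := σ z = ψ r (σ r) z

section
variable (hT : IsTreeHt ht) {ψ : α → α → α → α} (hψ : CoherentFam ht ψ) (σ : α ≃o α)
include hT hψ

omit hψ in
theorem hψht (r : α) : ht r = ht (σ r) := (ht_map hT σ r).symm

theorem E_self (r : α) : E ψ σ r r := by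
  have h := hψ.maps r (σ r) r (hψht hT σ r) le_rfl
  exact eq_of_ht_eq hT h.1 (by rw [h.2, ht_map hT σ])

theorem E_down {r z z' : α} (hrz : r ≤ z) (hzz' : z ≤ z') (hE : E ψ σ r z') : E ψ σ r z := by
  have h1 : σ z ≤ σ z' := by rw [OrderIso.le_iff_le]; exact hzz'
  have h2 : ψ r (σ r) z ≤ ψ r (σ r) z' :=
    (hψ.mono r (σ r) z z' (hψht hT σ r) hrz (hrz.trans hzz')).mp hzz'
  rw [← hE] at h2
  have hht : ht (ψ r (σ r) z) = ht (σ z) := by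
    rw [(hψ.maps r (σ r) z (hψht hT σ r) hrz).2, ht_map hT σ]
  rcases comp_of_le hT h1 h2 with h | h
  · exact eq_of_ht_eq hT h hht.symm
  · exact (eq_of_ht_eq hT h hht).symm

theorem E_comp {r r' z : α} (h1 : r ≤ r') (h2 : r' ≤ z) (hE1 : E ψ σ r r')
    (hE2 : E ψ σ r' z) : E ψ σ r z := by
  rw [E, hE2, hE1, hψ.coh r (σ r) r' z (hψht hT σ r) h1 h2]

theorem E_mid {r r' z : α} (h1 : r ≤ r') (h2 : r' ≤ z) (hE1 : E ψ σ r r')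
    (hE2 : E ψ σ r z) : E ψ σ r' z := by
  rw [E, hE2, hE1, hψ.coh r (σ r) r' z (hψht hT σ r) h1 h2]

theorem E_up {r r' z : α} (h1 : r ≤ r') (h2 : r' ≤ z) (hE : E ψ σ r z) : E ψ σ r' z :=
  E_mid hT hψ σ h1 h2 (E_down hT hψ σ h1 h2 hE) hE

theorem E_limit {z : α} (hz : Order.IsSuccLimit (ht z)) : ∃ r, r ≤ z ∧ ht r < ht z ∧ E ψ σ r z := by
  obtain ⟨γ, hγ, H⟩ := hψ.trans z (σ z) (hψht hT σ z) hz
  obtain ⟨r, hr, hhr⟩ := exists_pred hT (z := z) hγ.le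
  refine ⟨r, hr, hhr ▸ hγ, ?_⟩
  have hsr : σ r ≤ σ z := by rw [OrderIso.le_iff_le]; exact hr
  exact (H r (σ r) hr hsr hhr (by rw [ht_map hT σ, hhr])).symm

/-- a deviation point: a node of successor height where `σ` differs from the canonical map
from its immediate predecessor -/
def Dev (ht : α → Ordinal.{v}) (ψ : α → α → α → α) (σ : α ≃o α) (z : α) : Prop :=
  ∃ w, w ≤ z ∧ ht z = ht w + 1 ∧ ¬ E ψ σ w z

/-- any bad node has a deviation point above it -/
theorem dev_of_bad {r : α} (h : ∃ z, r ≤ z ∧ ¬ E ψ σ r z) :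
    ∃ z₀, r ≤ z₀ ∧ ht r < ht z₀ ∧ Dev ht ψ σ z₀ := by
  classical
  set S : Set α := {z | r ≤ z ∧ ¬ E ψ σ r z} with hS
  obtain ⟨β₀, ⟨z₀, hz₀S, hhz₀⟩, hmin⟩ :=
    Ordinal.lt_wf.has_min (ht '' S) (Set.Nonempty.image _ h)
  have hrz₀ : r ≤ z₀ := hz₀S.1
  have hnE : ¬ E ψ σ r z₀ := hz₀S.2
  have hmin' : ∀ z ∈ S, ¬ ht z < ht z₀ := fun z hz hlt => hmin (ht z) ⟨z, hz, rfl⟩ (hhz₀ ▸ hlt)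
  have hhtr : ht r < ht z₀ := by
    rcases (ht_mono hT hrz₀).lt_or_eq with h' | h'
    · exact h'
    · exact absurd (eq_of_ht_eq hT hrz₀ h') (by rintro rfl; exact hnE (E_self hT hψ σ r))
  -- β₀ is not a limit
  have hnotlim : ¬ Order.IsSuccLimit (ht z₀) := by
    intro hlim
    obtain ⟨r₁, hr₁, hhr₁, hE₁⟩ := E_limit hT hψ σ hlim
    rcases comp_of_le hT hr₁ hrz₀ with hc | hc
    ·
      exact hnE (E_up hT hψ σ hc hrz₀ hE₁)
    · -- r ≤ r₁
      have hEr : E ψ σ r r₁ := by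
        by_contra hn
        exact hmin' r₁ ⟨hc, hn⟩ hhr₁
      exact hnE (E_comp hT hψ σ hc hr₁ hEr hE₁)
  rcases Ordinal.zero_or_succ_or_isSuccLimit (ht z₀) with h0 | ⟨δ, hδ⟩ | hl
  · exact absurd h0 (by exact (pos_iff_ne_zero.mp (lt_of_le_of_lt zero_le hhtr)))
  · -- successor case
    obtain ⟨w, hwz, hhw⟩ := exists_pred hT (z := z₀) (b := δ)
      (by rw [← hδ]; exact (Order.le_succ δ))
    have hδlt : δ < ht z₀ := by rw [← hδ]; exact Order.lt_succ δ
    have hrw : r ≤ w := le_of_ht_le hT hrz₀ hwz (by rw [hhw]; exact Order.lt_succ_iff.mp (hδ.symm ▸ hhtr))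
    refine ⟨z₀, hrz₀, hhtr, w, hwz, by rw [← hδ, hhw, Ordinal.add_one_eq_succ], ?_⟩
    intro hEw
    rcases (ht_mono hT hrw).lt_or_eq with hlt | heq
    · have hErw : E ψ σ r w := by
        by_contra hn
        exact hmin' w ⟨hrw, hn⟩ (hhw ▸ hδlt)
      exact hnE (E_comp hT hψ σ hrw hwz hErw hEw)
    · have : r = w := eq_of_ht_eq hT hrw heq
      subst this
      exact hnE hEw
  · exact absurd hl hnotlim

end
section
variable [PartialOrder α] {ht : α → Ordinal.{v}}

theorem bound_of_countable (h1 : ∀ t : α, ht t < (Cardinal.aleph 1).ord)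
    {s : Set α} (hs : s.Countable) :
    ∃ β < (Cardinal.aleph 1).ord, ∀ a ∈ s, ht a < β := by
  rcases s.eq_empty_or_nonempty with rfl | hne
  · exact ⟨1, Ordinal.one_lt_of_isSuccLimit (Cardinal.isSuccLimit_ord (aleph0_le_aleph 1)), by simp⟩
  · obtain ⟨f, hf⟩ := hs.exists_eq_range hne
    have hsup : (⨆ n, ht (f n)) < (Cardinal.aleph 1).ord := by
      apply Ordinal.iSup_lt_ord_lift _ (fun n => h1 (f n))
      rw [Cardinal.isRegular_aleph_one.cof_eq]
      simpa using Cardinal.aleph0_lt_aleph_one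
    refine ⟨(⨆ n, ht (f n)) + 1, ?_, ?_⟩
    · rw [Ordinal.add_one_eq_succ]
      exact (Cardinal.isSuccLimit_ord (aleph0_le_aleph 1)).succ_lt hsup
    · intro a ha
      rw [hf] at ha
      obtain ⟨n, rfl⟩ := ha
      rw [Ordinal.add_one_eq_succ, Order.lt_succ_iff]
      exact Ordinal.le_iSup (fun n => ht (f n)) n

theorem exists_above (h2 : ∀ β, β < (Cardinal.aleph 1).ord → ∃ t : α, ht t = β)
    (hN3 : ∀ t : α, ∀ β, ht t < β → (∃ u : α, ht u = β) → ∃ s, t < s ∧ ht s = β)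
    {t : α} {β : Ordinal} (h : ht t ≤ β) (hβ : β < (Cardinal.aleph 1).ord) :
    ∃ z, t ≤ z ∧ ht z = β := by
  rcases h.lt_or_eq with h' | h'
  · obtain ⟨s, hs, hhs⟩ := hN3 t β h' (h2 β hβ)
    exact ⟨s, hs.le, hhs⟩
  · exact ⟨t, le_rfl, h'⟩

theorem exists_max_antichain (P : Set α) :
    ∃ A, (A ⊆ P ∧ IsAntichain (· ≤ ·) A) ∧
      ∀ B, B ⊆ P → IsAntichain (· ≤ ·) B → A ⊆ B → B ⊆ A := by
  have hz : ∀ c ⊆ {A : Set α | A ⊆ P ∧ IsAntichain (· ≤ ·) A}, IsChain (· ⊆ ·) c →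
      ∃ ub ∈ {A : Set α | A ⊆ P ∧ IsAntichain (· ≤ ·) A}, ∀ s ∈ c, s ⊆ ub := by
    intro c hcS hchain
    refine ⟨⋃₀ c, ⟨?_, ?_⟩, fun s hs => Set.subset_sUnion_of_mem hs⟩
    · exact Set.sUnion_subset fun s hs => (hcS hs).1
    · rintro x ⟨sx, hsx, hxsx⟩ y ⟨sy, hsy, hysy⟩ hxy hle
      rcases eq_or_ne sx sy with rfl | hne
      · exact (hcS hsx).2 hxsx hysy hxy hle
      · rcases hchain hsx hsy hne with h | h
        · exact (hcS hsy).2 (h hxsx) hysy hxy hle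
        · exact (hcS hsx).2 hxsx (h hysy) hxy hle
  obtain ⟨m, hm⟩ := zorn_subset _ hz
  exact ⟨m, hm.prop, fun B hBP hBA hmB => hm.le_of_ge ⟨hBP, hBA⟩ hmB⟩

theorem max_antichain_comp {P A : Set α} (hA : A ⊆ P ∧ IsAntichain (· ≤ ·) A)
    (hmax : ∀ B, B ⊆ P → IsAntichain (· ≤ ·) B → A ⊆ B → B ⊆ A)
    {d : α} (hd : d ∈ P) : ∃ a ∈ A, a ≤ d ∨ d ≤ a := by
  by_cases hdA : d ∈ A
  · exact ⟨d, hdA, Or.inl le_rfl⟩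
  by_contra hcon
  push_neg at hcon
  have hins : IsAntichain (· ≤ ·) (insert d A) := by
    rintro x (rfl | hx) y (rfl | hy) hxy hle
    · exact hxy rfl
    · exact (hcon y hy).2 hle
    · exact (hcon x hx).1 hle
    · exact hA.2 hx hy hxy hle
  have : insert d A ⊆ A :=
    hmax _ (Set.insert_subset_iff.mpr ⟨hd, hA.1⟩) hins (Set.subset_insert _ _)
  exact hdA (this (Set.mem_insert _ _))
end

section
set_option linter.unusedSectionVars false
variable [PartialOrder α] {ht : α → Ordinal.{v}} (hT : IsTreeHt ht)
  (h1 : ∀ t : α, ht t < (Cardinal.aleph 1).ord)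
  (h2 : ∀ β, β < (Cardinal.aleph 1).ord → ∃ t : α, ht t = β)
  (h3 : ∀ A : Set α, IsAntichain (· ≤ ·) A → A.Countable)
  (hN3 : ∀ t : α, ∀ β, ht t < β → (∃ u : α, ht u = β) → ∃ s, t < s ∧ ht s = β)
  {ψ : α → α → α → α} (hψ : CoherentFam ht ψ) (σ : α ≃o α)
include hT h1 h2 h3 hN3 hψ

/-- Good nodes are dense: above every node there is a node `r` such that `σ` agrees with
`ψ r (σ r)` on the whole cone above `r`. -/
theorem good_dense (t : α) : ∃ r, t ≤ r ∧ ∀ z, r ≤ z → E ψ σ r z := by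
  classical
  by_contra hcon
  push_neg at hcon
  have hΩlim := Cardinal.isSuccLimit_ord (aleph0_le_aleph (1 : Ordinal.{v}))
  set P : Ordinal → Set α :=
    fun β => {d | t ≤ d ∧ ∃ z', Dev ht ψ σ z' ∧ z' ≤ d ∧ β < ht z'} with hP
  have hstep : ∀ β, β < (Cardinal.aleph 1).ord → ∀ x, t ≤ x → ∃ d ∈ P β, x ≤ d := by
    intro β hβ x hx
    have hm1 : max β (ht x) + 1 < (Cardinal.aleph 1).ord := by
      rw [Ordinal.add_one_eq_succ]; exact hΩlim.succ_lt (max_lt hβ (h1 x))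
    have hmle : ht x ≤ max β (ht x) + 1 :=
      le_trans (le_max_right _ _) (by rw [Ordinal.add_one_eq_succ]; exact (Order.le_succ _))
    obtain ⟨x', hxx', hhx'⟩ := exists_above h2 hN3 hmle hm1
    obtain ⟨z₀, hx'z₀, hhz₀, hdev⟩ := dev_of_bad hT hψ σ (hcon x' (hx.trans hxx'))
    have hβx' : β < ht x' := by
      rw [hhx', Ordinal.add_one_eq_succ]
      exact (le_max_left β (ht x)).trans_lt (Order.lt_succ _)
    have hβz₀ : β < ht z₀ := hβx'.trans hhz₀
    exact ⟨z₀, ⟨(hx.trans hxx').trans hx'z₀, z₀, hdev, le_rfl, hβz₀⟩, hxx'.trans hx'z₀⟩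
  choose A hA hmaxA using fun β => exists_max_antichain (P := P β)
  choose B hB1 hB2 using fun β => bound_of_countable h1 (h3 (A β) (hA β).2)
  set f : ℕ → Ordinal.{v} :=
    (fun n => Nat.rec (ht t) (fun _ βn => max (βn + 1) (B βn)) n) with hfdef
  have hfs : ∀ n, f (n + 1) = max (f n + 1) (B (f n)) := fun n => rfl
  have hfΩ : ∀ n, f n < (Cardinal.aleph 1).ord := by
    intro n
    induction n with
    | zero => exact h1 t
    | succ n ih =>
      rw [hfs]
      exact max_lt (by rw [Ordinal.add_one_eq_succ]; exact hΩlim.succ_lt ih) (hB1 _)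
  have hmono : ∀ n, f n < f (n + 1) := by
    intro n
    have h' : f n < f n + 1 := by rw [Ordinal.add_one_eq_succ]; exact Order.lt_succ _
    exact h'.trans_le (by rw [hfs n]; exact le_max_left _ _)
  set lam := ⨆ n, f n with hlam
  have hlamΩ : lam < (Cardinal.aleph 1).ord := by
    apply Ordinal.iSup_lt_ord_lift _ hfΩ
    rw [Cardinal.isRegular_aleph_one.cof_eq]
    simpa using Cardinal.aleph0_lt_aleph_one
  have hlef : ∀ n, f n ≤ lam := fun n => Ordinal.le_iSup f n
  have hltf : ∀ n, f n < lam := fun n => lt_of_lt_of_le (hmono n) (hlef (n + 1))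
  have hlim : Order.IsSuccLimit lam := by
    rw [Ordinal.isSuccLimit_iff, Order.isSuccPrelimit_iff_succ_lt]; refine ⟨?_, ?_⟩
    · exact pos_iff_ne_zero.mp (lt_of_le_of_lt zero_le (hltf 0))
    · intro a ha
      obtain ⟨n, hn⟩ : ∃ n, a < f n := by
        by_contra hno
        push_neg at hno
        exact absurd (Ordinal.iSup_le hno) (not_le.mpr ha)
      exact lt_of_le_of_lt (Order.succ_le_of_lt hn) (hltf n)
  obtain ⟨zs, htzs, hhzs⟩ := exists_above h2 hN3 (show ht t ≤ lam from hlef 0) hlamΩ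
  obtain ⟨r₁, hr₁, hhr₁, hEr₁⟩ := E_limit hT hψ σ (z := zs) (by rw [hhzs]; exact hlim)
  obtain ⟨n, hn⟩ : ∃ n, ht r₁ < f n := by
    by_contra hno
    push_neg at hno
    refine absurd (Ordinal.iSup_le hno) (not_le.mpr ?_)
    rw [← hlam, ← hhzs]
    exact hhr₁
  obtain ⟨d, hdP, hzsd⟩ := hstep (f n) (hfΩ n) zs htzs
  obtain ⟨a, haA, hcomp⟩ := max_antichain_comp (hA (f n)) (hmaxA (f n)) hdP
  have haht : ht a < lam := by
    refine lt_of_lt_of_le (hB2 (f n) a haA) (le_trans (le_max_right (f n + 1) _) ?_)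
    rw [← hfs]
    exact hlef (n + 1)
  have haz : a ≤ zs := by
    rcases hcomp with h | h
    · exact le_of_ht_le hT h hzsd (by rw [hhzs]; exact haht.le)
    · exfalso
      have : ht zs ≤ ht a := ht_mono hT (hzsd.trans h)
      rw [hhzs] at this
      exact absurd haht (not_lt.mpr this)
  obtain ⟨-, z', hz'dev, hz'a, hfz'⟩ := (hA (f n)).1 haA
  obtain ⟨w, hwz', hhz', hnEw⟩ := hz'dev
  have hz'zs : z' ≤ zs := hz'a.trans haz
  have hr₁ht : ht r₁ ≤ ht w := by
    have h' : ht r₁ < ht z' := hn.trans hfz'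
    rw [hhz', Ordinal.add_one_eq_succ, Order.lt_succ_iff] at h'
    exact h'
  have hr₁w : r₁ ≤ w := le_of_ht_le hT hr₁ (hwz'.trans hz'zs) hr₁ht
  exact hnEw (E_down hT hψ σ hwz' hz'zs (E_up hT hψ σ hr₁w (hwz'.trans hz'zs) hEr₁))
end

section
set_option linter.unusedSectionVars false
variable [PartialOrder α] {ht : α → Ordinal.{v}}

theorem level_antichain (hT : IsTreeHt ht) (β : Ordinal.{v}) :
    IsAntichain (· ≤ ·) {t : α | ht t = β} := by
  intro x hx y hy hxy hle
  exact hxy (eq_of_ht_eq hT hle (hx.trans hy.symm))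

theorem mk_le_continuum (hT : IsTreeHt ht)
    (h1 : ∀ t : α, ht t < (Cardinal.aleph 1).ord)
    (h3 : ∀ A : Set α, IsAntichain (· ≤ ·) A → A.Countable) :
    Cardinal.mk α ≤ (2 : Cardinal.{u}) ^ Cardinal.aleph0 := by
  classical
  have hg : ∀ β : Ordinal.{v}, ∃ g : α → ℕ,
      ∀ x y, ht x = β → ht y = β → g x = g y → x = y := by
    intro β
    obtain ⟨fm, hfm⟩ := Set.countable_iff_exists_injective.mp (h3 _ (level_antichain hT β))
    refine ⟨fun x => if h : ht x = β then fm ⟨x, h⟩ else 0, ?_⟩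
    intro x y hx hy hxy
    simp only [dif_pos hx, dif_pos hy] at hxy
    exact Subtype.ext_iff.mp (hfm hxy)
  choose g hginj using hg
  set F : α → ((Cardinal.aleph 1).ord.ToType × ℕ) :=
    fun t => (Ordinal.ToType.mk ⟨ht t, h1 t⟩, g (ht t) t) with hF
  have hFinj : Function.Injective F := by
    intro x y hxy
    have h1' : ht x = ht y := by
      have := congrArg Prod.fst hxy
      simp only [hF] at this
      have := (Ordinal.ToType.mk).injective this
      exact Subtype.ext_iff.mp this
    have h2' : g (ht x) x = g (ht x) y := by
      have := congrArg Prod.snd hxy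
      simp only [hF] at this
      rw [← h1'] at this
      exact this
    exact hginj (ht x) x y rfl h1'.symm h2'
  have hle : Cardinal.lift.{v, u} #α ≤
      Cardinal.lift.{u, v} #((Cardinal.aleph 1).ord.ToType × ℕ) :=
    Cardinal.lift_mk_le'.mpr ⟨⟨F, hFinj⟩⟩
  have hmk : #((Cardinal.aleph (1 : Ordinal.{v})).ord.ToType × ℕ) = Cardinal.aleph 1 := by
    rw [Cardinal.mk_prod, Cardinal.mk_ord_toType, Cardinal.mk_nat, Cardinal.lift_aleph0,
      Cardinal.lift_uzero, Cardinal.mul_eq_max (aleph0_le_aleph 1) le_rfl,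
      max_eq_left (aleph0_le_aleph 1)]
  rw [hmk] at hle
  have hle2 : Cardinal.lift.{v, u} #α ≤ Cardinal.lift.{v, u} (2 ^ Cardinal.aleph0) := by
    calc Cardinal.lift.{v, u} #α ≤ Cardinal.lift.{u, v} (Cardinal.aleph 1) := hle
    _ ≤ Cardinal.lift.{u, v} Cardinal.continuum :=
        Cardinal.lift_le.mpr Cardinal.aleph_one_le_continuum
    _ = Cardinal.continuum := Cardinal.lift_continuum
    _ = Cardinal.lift.{v, u} Cardinal.continuum := Cardinal.lift_continuum.symm
    _ = Cardinal.lift.{v, u} (2 ^ Cardinal.aleph0) := by rw [Cardinal.two_power_aleph0]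
  exact Cardinal.lift_le.mp hle2
end

section
set_option linter.unusedSectionVars false
variable [PartialOrder α] {ht : α → Ordinal.{v}} (hT : IsTreeHt ht)
  (h1 : ∀ t : α, ht t < (Cardinal.aleph 1).ord)
  (h2 : ∀ β, β < (Cardinal.aleph 1).ord → ∃ t : α, ht t = β)
  (h3 : ∀ A : Set α, IsAntichain (· ≤ ·) A → A.Countable)
  (h4 : ∀ C : Set α, IsChain (· ≤ ·) C → C.Countable)
  (hN3 : ∀ t : α, ∀ β, ht t < β → (∃ u : α, ht u = β) → ∃ s, t < s ∧ ht s = β)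
  {ψ : α → α → α → α} (hψ : CoherentFam ht ψ)
include hT h1 h2 h3 h4 hN3 hψ

theorem aut_le (t₀ : α) : #(α ≃o α) ≤ (2 : Cardinal.{u}) ^ Cardinal.aleph0 := by
  classical
  have key : ∀ σ : α ≃o α, ∃ g : ℕ → ℕ → α,
      (∀ n z, g n 0 ≤ z → E ψ σ (g n 0) z) ∧
      (∀ z, ∃ n, g n 0 ≤ z ∨ z ≤ g n 0) ∧
      (∀ n z, z ≤ g n 0 → ∃ m, g n (m + 1) = z) := by
    intro σ
    obtain ⟨A, hA, hmaxA⟩ := exists_max_antichain (P := {r : α | ∀ z, r ≤ z → E ψ σ r z})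
    have hcompat : ∀ z, ∃ a ∈ A, a ≤ z ∨ z ≤ a := by
      intro z
      obtain ⟨gd, hzgd, hgood⟩ := good_dense hT h1 h2 h3 hN3 hψ σ z
      obtain ⟨a, haA, hcomp⟩ := max_antichain_comp hA hmaxA hgood
      rcases hcomp with h | h
      · exact ⟨a, haA, comp_of_le hT h hzgd⟩
      · exact ⟨a, haA, Or.inr (hzgd.trans h)⟩
    have hAne : A.Nonempty := by
      obtain ⟨a, haA, -⟩ := hcompat t₀
      exact ⟨a, haA⟩
    obtain ⟨e, he⟩ := (h3 A hA.2).exists_eq_range hAne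
    have hCcnt : ∀ n : ℕ, (insert (e n) (Set.Iio (e n))).Countable := by
      intro n
      refine Set.Countable.insert _ (h4 _ ?_)
      intro x hx y hy hxy
      rcases hT.pred_chain (e n) hx hy hxy with h | h
      · exact Or.inl h.le
      · exact Or.inr h.le
    have hdex := fun n => (hCcnt n).exists_eq_range ⟨e n, Set.mem_insert _ _⟩
    choose d hd using hdex
    refine ⟨fun n m => Nat.casesOn m (e n) (d n), ?_, ?_, ?_⟩
    · intro n z hz
      have hmem : e n ∈ A := he ▸ Set.mem_range_self n
      exact hA.1 hmem z hz
    · intro z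
      obtain ⟨a, haA, hc⟩ := hcompat z
      rw [he] at haA
      obtain ⟨n, rfl⟩ := haA
      exact ⟨n, hc⟩
    · intro n z hz
      have hmem : z ∈ insert (e n) (Set.Iio (e n)) := by
        rcases hz.lt_or_eq with h | h
        · exact Set.mem_insert_iff.mpr (Or.inr h)
        · exact Set.mem_insert_iff.mpr (Or.inl h)
      rw [hd n] at hmem
      exact hmem
  choose g hg1 hg2 hg3 using key
  have hFinj : Function.Injective
      (fun (σ : α ≃o α) => (fun p : ℕ × ℕ => (g σ p.1 p.2, σ (g σ p.1 p.2)))) := by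
    intro σ τ hστ
    have hgeq : ∀ n m, g σ n m = g τ n m := by
      intro n m
      exact congrArg Prod.fst (congrFun hστ (n, m))
    have hveq : ∀ n m, σ (g σ n m) = τ (g σ n m) := by
      intro n m
      have h' := congrArg Prod.snd (congrFun hστ (n, m))
      simp only at h'
      rw [← hgeq n m] at h'
      exact h'
    apply OrderIso.ext
    funext z
    obtain ⟨n, hc⟩ := hg2 σ z
    rcases hc with h | h
    · have hEσ : E ψ σ (g σ n 0) z := hg1 σ n z h
      have hEτ : E ψ τ (g τ n 0) z := hg1 τ n z (by rw [← hgeq n 0]; exact h)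
      have hτ : τ z = ψ (g σ n 0) (σ (g σ n 0)) z := by
        rw [E] at hEτ
        rw [hEτ, ← hgeq n 0, ← hveq n 0]
      rw [E] at hEσ
      show σ z = τ z
      rw [hEσ, hτ]
    · obtain ⟨m, hm⟩ := hg3 σ n z h
      have h' := hveq n (m + 1)
      rw [hm] at h'
      exact h'
  calc #(α ≃o α) ≤ #(ℕ × ℕ → α × α) := Cardinal.mk_le_of_injective hFinj
    _ ≤ 2 ^ Cardinal.aleph0 := by
        rw [Cardinal.mk_arrow]
        have hb : Cardinal.lift.{0, u} #(α × α) ≤ 2 ^ Cardinal.aleph0 := by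
          rw [Cardinal.lift_uzero, Cardinal.mk_prod, Cardinal.lift_id]
          have hc := mk_le_continuum hT h1 h3
          calc #α * #α ≤ (2 ^ Cardinal.aleph0) * (2 ^ Cardinal.aleph0) := mul_le_mul' hc hc
            _ = 2 ^ Cardinal.aleph0 := Cardinal.mul_eq_self
                (by rw [Cardinal.two_power_aleph0]; exact Cardinal.aleph0_le_continuum)
        have hn : Cardinal.lift.{u, 0} #(ℕ × ℕ) = Cardinal.aleph0 := by
          simp [Cardinal.mk_prod]
        rw [hn]
        calc (Cardinal.lift.{0, u} #(α × α)) ^ Cardinal.aleph0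
            ≤ (2 ^ Cardinal.aleph0) ^ Cardinal.aleph0 := Cardinal.power_le_power_right hb
          _ = 2 ^ (Cardinal.aleph0 * Cardinal.aleph0) := Cardinal.power_mul.symm
          _ = 2 ^ Cardinal.aleph0 := by rw [Cardinal.aleph0_mul_aleph0]
end

section
set_option linter.unusedSectionVars false
set_option maxHeartbeats 1000000
variable [PartialOrder α] {ht : α → Ordinal.{v}} {ψ : α → α → α → α}

theorem aut_ge (hT : IsTreeHt ht) (hA : Aleph0Splitting ht) (hψ : CoherentFam ht ψ)
    (t₀ : α) : (2 : Cardinal.{u}) ^ Cardinal.aleph0 ≤ #(α ≃o α) := by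
  classical
  -- pick three distinct immediate successors of each node
  have hpick : ∀ t : α, ∃ p : α × α × α,
      (t < p.1 ∧ ht p.1 = ht t + 1) ∧ (t < p.2.1 ∧ ht p.2.1 = ht t + 1) ∧
      (t < p.2.2 ∧ ht p.2.2 = ht t + 1) ∧ p.1 ≠ p.2.1 ∧ p.1 ≠ p.2.2 ∧ p.2.1 ≠ p.2.2 := by
    intro t
    obtain ⟨hinf, -⟩ := hA t
    obtain ⟨u, hu⟩ := hinf.nonempty
    obtain ⟨a, ha⟩ := (hinf.diff (Set.finite_singleton u)).nonempty
    obtain ⟨b, hb⟩ := (hinf.diff ((Set.finite_singleton u).insert a)).nonempty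
    obtain ⟨ha1, ha2⟩ := ha
    obtain ⟨hb1, hb2⟩ := hb
    simp only [Set.mem_insert_iff, Set.mem_singleton_iff, not_or] at ha2 hb2
    exact ⟨(u, a, b), ⟨hu.1, hu.2⟩, ⟨ha1.1, ha1.2⟩, ⟨hb1.1, hb1.2⟩,
      fun h => ha2 h.symm, fun h => hb2.2 h.symm, fun h => hb2.1 h.symm⟩
  choose pk hpk using hpick
  set tseq : ℕ → α := fun n => Nat.rec t₀ (fun _ v => (pk v).1) n with htseq
  set A : ℕ → α := fun n => (pk (tseq n)).2.1 with hAdef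
  set B : ℕ → α := fun n => (pk (tseq n)).2.2 with hBdef
  set s : ℕ → Ordinal.{v} := fun n => ht (tseq n) with hsdef
  have htseqs : ∀ n, tseq (n + 1) = (pk (tseq n)).1 := fun n => rfl
  have hU : ∀ n, tseq n < tseq (n + 1) ∧ ht (tseq (n + 1)) = s n + 1 :=
    fun n => ⟨(hpk (tseq n)).1.1, (hpk (tseq n)).1.2⟩
  have hAn : ∀ n, tseq n < A n ∧ ht (A n) = s n + 1 :=
    fun n => ⟨(hpk (tseq n)).2.1.1, (hpk (tseq n)).2.1.2⟩
  have hBn : ∀ n, tseq n < B n ∧ ht (B n) = s n + 1 :=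
    fun n => ⟨(hpk (tseq n)).2.2.1.1, (hpk (tseq n)).2.2.1.2⟩
  have hUA : ∀ n, tseq (n + 1) ≠ A n := fun n => (hpk (tseq n)).2.2.2.1
  have hUB : ∀ n, tseq (n + 1) ≠ B n := fun n => (hpk (tseq n)).2.2.2.2.1
  have hABne : ∀ n, A n ≠ B n := fun n => (hpk (tseq n)).2.2.2.2.2
  have hsmono : StrictMono s := by
    apply strictMono_nat_of_lt_succ
    intro n
    have := (hU n).2
    rw [show s (n + 1) = ht (tseq (n + 1)) from rfl, this, Ordinal.add_one_eq_succ]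
    exact Order.lt_succ _
  have htmono : Monotone tseq := monotone_nat_of_le_succ (fun n => (hU n).1.le)
  have hC2 : ∀ n m, n < m → tseq (n + 1) ≤ tseq m := fun n m h => htmono h
  have hhts : ∀ n, ht (A n) = s n + 1 := fun n => (hAn n).2
  have hhts' : ∀ n, ht (B n) = s n + 1 := fun n => (hBn n).2
  have hsucc1 : ∀ {a b : Ordinal.{v}}, a < b → a + 1 < b + 1 := by
    intro a b h
    rw [Ordinal.add_one_eq_succ, Ordinal.add_one_eq_succ]
    exact Order.succ_lt_succ h
  -- the master incomparability lemma
  have master : ∀ n m (c d : α), (c = A n ∨ c = B n) → (d = A m ∨ d = B m) → c ≠ d →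
      ¬ c ≤ d := by
    intro n m c d hc hd hne hle
    have hhc : ht c = s n + 1 := by rcases hc with rfl | rfl; exacts [hhts n, hhts' n]
    have hhd : ht d = s m + 1 := by rcases hd with rfl | rfl; exacts [hhts m, hhts' m]
    rcases lt_trichotomy n m with hnm | rfl | hnm
    · -- n < m
      have htd : tseq m < d := by rcases hd with rfl | rfl; exacts [(hAn m).1, (hBn m).1]
      have h1 : tseq (n + 1) ≤ d := (hC2 n m hnm).trans htd.le
      have h2 : c = tseq (n + 1) := by
        have hht : ht c = ht (tseq (n + 1)) := by rw [hhc, (hU n).2]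
        rcases comp_of_le hT hle h1 with h | h
        · exact eq_of_ht_eq hT h hht
        · exact (eq_of_ht_eq hT h hht.symm).symm
      rcases hc with rfl | rfl
      · exact hUA n h2.symm
      · exact hUB n h2.symm
    · exact hne (eq_of_ht_eq hT hle (hhc.trans hhd.symm))
    · -- m < n
      have : ht c ≤ ht d := ht_mono hT hle
      rw [hhc, hhd] at this
      exact absurd (hsucc1 (hsmono hnm)) (not_lt.mpr this)
  have hfam : ∀ n (c : α), (c = A n ∨ c = B n) → ∀ m (d : α), (d = A m ∨ d = B m) →
      ∀ z, c ≤ z → d ≤ z → c = d := by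
    intro n c hc m d hd z hcz hdz
    by_contra hne
    rcases comp_of_le hT hcz hdz with h | h
    · exact master n m c d hc hd hne h
    · exact master m n d c hd hc (fun h' => hne h'.symm) h
  have hAinj : ∀ n m, A n = A m → n = m := by
    intro n m h
    by_contra hne
    have := congrArg ht h
    rw [hhts n, hhts m] at this
    rcases Nat.lt_or_ge n m with h' | h'
    · exact absurd this (ne_of_lt (hsucc1 (hsmono h')))
    · rcases Nat.lt_or_ge m n with h'' | h''
      · exact absurd this.symm (ne_of_lt (hsucc1 (hsmono h'')))
      · exact hne (le_antisymm h'' h')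
  have hABd : ∀ n m, A n ≠ B m := by
    intro n m h
    rcases eq_or_ne n m with rfl | hne
    · exact hABne n h
    · have := congrArg ht h
      rw [hhts n, hhts' m] at this
      rcases Nat.lt_or_ge n m with h' | h'
      · exact absurd this (ne_of_lt (hsucc1 (hsmono h')))
      · exact absurd this.symm (ne_of_lt (hsucc1 (hsmono (lt_of_le_of_ne h' (Ne.symm hne)))))
  have hhAB : ∀ n, ht (A n) = ht (B n) := fun n => (hhts n).trans (hhts' n).symm
  -- the swap map
  set F : (ℕ → Bool) → α → α := fun x z =>
    if h : ∃ n, x n = true ∧ A n ≤ z then ψ (A h.choose) (B h.choose) z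
    else if h' : ∃ n, x n = true ∧ B n ≤ z then ψ (B h'.choose) (A h'.choose) z
    else z with hFdef
  have hW1 : ∀ x n z, x n = true → A n ≤ z → F x z = ψ (A n) (B n) z := by
    intro x n z hx hz
    have h : ∃ n, x n = true ∧ A n ≤ z := ⟨n, hx, hz⟩
    have hch : A h.choose = A n :=
      hfam h.choose _ (Or.inl rfl) n _ (Or.inl rfl) z h.choose_spec.2 hz
    have : h.choose = n := hAinj _ _ hch
    simp only [hFdef, dif_pos h, this]
  have hW2 : ∀ x n z, x n = true → B n ≤ z → F x z = ψ (B n) (A n) z := by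
    intro x n z hx hz
    have hno : ¬ ∃ m, x m = true ∧ A m ≤ z := by
      rintro ⟨m, hxm, hmz⟩
      exact hABd m n (hfam m _ (Or.inl rfl) n _ (Or.inr rfl) z hmz hz)
    have h' : ∃ n, x n = true ∧ B n ≤ z := ⟨n, hx, hz⟩
    have hch : B h'.choose = B n :=
      hfam h'.choose _ (Or.inr rfl) n _ (Or.inr rfl) z h'.choose_spec.2 hz
    have hBinj : ∀ n m, B n = B m → n = m := by
      intro n m h
      by_contra hne2
      have h5 := congrArg ht h
      rw [hhts' n, hhts' m] at h5
      rcases Nat.lt_or_ge n m with h6 | h6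
      · exact absurd h5 (ne_of_lt (hsucc1 (hsmono h6)))
      · rcases Nat.lt_or_ge m n with h7 | h7
        · exact absurd h5.symm (ne_of_lt (hsucc1 (hsmono h7)))
        · exact hne2 (le_antisymm h7 h6)
    have heq : h'.choose = n := hBinj _ _ hch
    simp only [hFdef, dif_neg hno, dif_pos h', heq]
  have hW3 : ∀ x z, (¬ ∃ n, x n = true ∧ A n ≤ z) → (¬ ∃ n, x n = true ∧ B n ≤ z) →
      F x z = z := by
    intro x z h h'
    simp only [hFdef, dif_neg h, dif_neg h']
  -- involution
  have hinv : ∀ x z, F x (F x z) = z := by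
    intro x z
    by_cases h : ∃ n, x n = true ∧ A n ≤ z
    · obtain ⟨n, hx, hz⟩ := h
      rw [hW1 x n z hx hz]
      have hB : B n ≤ ψ (A n) (B n) z := (hψ.maps (A n) (B n) z (hhAB n) hz).1
      rw [hW2 x n _ hx hB,
        hψ.comm (A n) (B n) (A n) z (hhAB n) (hhAB n).symm hz]
      exact hψ.refl (A n) z hz
    · by_cases h' : ∃ n, x n = true ∧ B n ≤ z
      · obtain ⟨n, hx, hz⟩ := h'
        rw [hW2 x n z hx hz]
        have hA2 : A n ≤ ψ (B n) (A n) z := (hψ.maps (B n) (A n) z (hhAB n).symm hz).1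
        rw [hW1 x n _ hx hA2,
          hψ.comm (B n) (A n) (B n) z (hhAB n).symm (hhAB n) hz]
        exact hψ.refl (B n) z hz
      · rw [hW3 x z h h', hW3 x z h h']
  -- monotonicity
  have hFmono : ∀ x (z w : α), z ≤ w → F x z ≤ F x w := by
    intro x z w hzw
    by_cases h : ∃ n, x n = true ∧ A n ≤ z
    · obtain ⟨n, hx, hz⟩ := h
      rw [hW1 x n z hx hz, hW1 x n w hx (hz.trans hzw)]
      exact (hψ.mono (A n) (B n) z w (hhAB n) hz (hz.trans hzw)).mp hzw
    · by_cases h' : ∃ n, x n = true ∧ B n ≤ z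
      · obtain ⟨n, hx, hz⟩ := h'
        rw [hW2 x n z hx hz, hW2 x n w hx (hz.trans hzw)]
        exact (hψ.mono (B n) (A n) z w (hhAB n).symm hz (hz.trans hzw)).mp hzw
      · rw [hW3 x z h h']
        by_cases hw : ∃ n, x n = true ∧ A n ≤ w
        · obtain ⟨n, hx, hwn⟩ := hw
          rw [hW1 x n w hx hwn]
          have hzA : z < A n := by
            rcases comp_of_le hT hzw hwn with hc | hc
            · rcases hc.lt_or_eq with hc' | heq
              · exact hc'
              · exact absurd ⟨n, hx, heq.ge⟩ h
            · exact absurd ⟨n, hx, hc⟩ h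
          have hhz : ht z ≤ ht (tseq n) := by
            have := hT.ht_lt z (A n) hzA
            rw [hhts n, Ordinal.add_one_eq_succ, Order.lt_succ_iff] at this
            exact this
          have hzt : z ≤ tseq n := le_of_ht_le hT hzA.le (hAn n).1.le hhz
          exact hzt.trans ((hBn n).1.le.trans (hψ.maps (A n) (B n) w (hhAB n) hwn).1)
        · by_cases hw' : ∃ n, x n = true ∧ B n ≤ w
          · obtain ⟨n, hx, hwn⟩ := hw'
            rw [hW2 x n w hx hwn]
            have hzB : z < B n := by
              rcases comp_of_le hT hzw hwn with hc | hc
              · rcases hc.lt_or_eq with hc' | heq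
                · exact hc'
                · exact absurd ⟨n, hx, heq.ge⟩ h'
              · exact absurd ⟨n, hx, hc⟩ h'
            have hhz : ht z ≤ ht (tseq n) := by
              have := hT.ht_lt z (B n) hzB
              rw [hhts' n, Ordinal.add_one_eq_succ, Order.lt_succ_iff] at this
              exact this
            have hzt : z ≤ tseq n := le_of_ht_le hT hzB.le (hBn n).1.le hhz
            exact hzt.trans ((hAn n).1.le.trans (hψ.maps (B n) (A n) w (hhAB n).symm hwn).1)
          · rw [hW3 x w hw hw']
            exact hzw
  -- the order isomorphisms
  set G : (ℕ → Bool) → (α ≃o α) := fun x =>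
    { toFun := F x
      invFun := F x
      left_inv := hinv x
      right_inv := hinv x
      map_rel_iff' := by
        intro a b
        constructor
        · intro hab
          have h2 := hFmono x _ _ hab
          simp only [Equiv.coe_fn_mk] at h2
          rwa [hinv x a, hinv x b] at h2
        · exact hFmono x a b } with hGdef
  have hGinj : Function.Injective G := by
    intro x y hxy
    by_contra hne
    obtain ⟨n, hn⟩ : ∃ n, x n ≠ y n := by
      by_contra hno
      push_neg at hno
      exact hne (funext hno)
    have hval : F x (A n) = F y (A n) := congrArg (fun (σ : α ≃o α) => σ (A n)) hxy
    have hswap : ∀ u v : ℕ → Bool, u n = true → v n = false → F u (A n) ≠ F v (A n) := by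
      intro u v hu hv
      have h1 : F u (A n) = B n := by
        rw [hW1 u n (A n) hu le_rfl]
        have hm := hψ.maps (A n) (B n) (A n) (hhAB n) le_rfl
        exact (eq_of_ht_eq hT hm.1 (by rw [hm.2, hhAB n])).symm
      have h2 : F v (A n) = A n := by
        apply hW3
        · rintro ⟨m, hvm, hmz⟩
          have hAm := hfam m _ (Or.inl rfl) n _ (Or.inl rfl) (A n) hmz le_rfl
          rw [hAinj m n hAm] at hvm
          rw [hv] at hvm
          exact Bool.noConfusion hvm
        · rintro ⟨m, hvm, hmz⟩
          exact hABd n m (hfam n _ (Or.inl rfl) m _ (Or.inr rfl) (A n) le_rfl hmz)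
      rw [h1, h2]
      exact fun hc => hABd n n hc.symm
    cases hx : x n <;> cases hy : y n
    · exact hn (hx.trans hy.symm)
    · exact hswap y x hy hx hval.symm
    · exact hswap x y hx hy hval
    · exact hn (hx.trans hy.symm)
  have hcard : (2 : Cardinal.{u}) ^ Cardinal.aleph0 = #(ULift.{u} (ℕ → Bool)) := by
    rw [Cardinal.mk_uLift]
    have h0 : #(ℕ → Bool) = 2 ^ Cardinal.aleph0 := by
      rw [Cardinal.mk_arrow, Cardinal.mk_bool, Cardinal.mk_nat]
      simp [Cardinal.lift_id]
    rw [h0, Cardinal.two_power_aleph0, Cardinal.two_power_aleph0, Cardinal.lift_continuum]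
  rw [hcard]
  exact Cardinal.mk_le_of_injective (hGinj.comp ULift.down_injective)

end

end AutCard

/-- The automorphism group of a strongly homogeneous Souslin tree has exactly `2 ^ ℵ₀`
elements. -/
theorem automorphism_group_card [PartialOrder α] (ht : α → Ordinal)
    (hS : IsSouslinTree ht) (hN : IsNormalTree ht) (hA : Aleph0Splitting ht)
    (ψ : α → α → α → α) (hψ : CoherentFam ht ψ) :
    #(α ≃o α) = 2 ^ Cardinal.aleph0 := by
  obtain ⟨hT, h1, h2, h3, h4⟩ := hS
  obtain ⟨⟨r₀, hr₀⟩, hN2, hN3, hN4⟩ := hN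
  exact le_antisymm (AutCard.aut_le hT h1 h2 h3 h4 hN3 hψ r₀) (AutCard.aut_ge hT hA hψ r₀)
end

section
/- Let T be a Souslin tree on which, for each level α, no two distinct nodes of T_α have the same number of immediate successors. Then T is totally rigid: T(s) and T(t) are non-isomorphic for all distinct nodes s, t of T. -/
open Cardinal Ordinal Set

universe u

variable {α : Type u}

namespace Rigid

variable [PartialOrder α] {ht : α → Ordinal}

lemma ht_mono (hT : IsTreeHt ht) {s u : α} (h : s ≤ u) : ht s ≤ ht u := by
  rcases eq_or_lt_of_le h with h | h
  · rw [h]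
  · exact (hT.ht_lt _ _ h).le

lemma eq_of_le_of_ht_eq (hT : IsTreeHt ht) {s u : α} (h : s ≤ u) (hh : ht s = ht u) :
    s = u := by
  rcases eq_or_lt_of_le h with h | h
  · exact h
  · exact absurd (hT.ht_lt _ _ h) (by rw [hh]; exact lt_irrefl _)

/-- relative height is not increased by an order iso of cones. -/
lemma relHt_le (hT : IsTreeHt ht) {s t : α}
    (f : {x : α // s ≤ x} ≃o {x : α // t ≤ x}) (u : {x : α // s ≤ x}) :
    ht t + (ht u.1 - ht s) ≤ ht (f u).1 := by
  have main : ∀ β (u : {x : α // s ≤ x}), ht u.1 = β →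
      ht t + (β - ht s) ≤ ht (f u).1 := by
    intro β
    induction β using Ordinal.induction with
    | h β IH =>
      intro u hu
      have hts_le : ht s ≤ β := hu ▸ ht_mono hT u.2
      have step : ∀ δ, δ < β - ht s → ht t + δ < ht (f u).1 := by
        intro δ hδ
        have h1 : ht s + δ < β := by
          calc ht s + δ < ht s + (β - ht s) := by rwa [add_lt_add_iff_left]
            _ = β := Ordinal.add_sub_cancel_of_le hts_le
        obtain ⟨w, hwu, hw⟩ := hT.ht_onto u.1 (ht s + δ) (by rw [hu]; exact h1)
        have hge : ht s ≤ ht w := by rw [hw]; exact le_self_add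
        have hsw : s ≤ w := by
          rcases eq_or_lt_of_le u.2 with h | h
          · exact absurd (hT.ht_lt _ _ hwu) (not_lt.2 (h ▸ hge))
          · by_cases hsw : s = w
            · exact hsw.le
            · rcases hT.pred_chain u.1 h hwu hsw with h' | h'
              · exact h'.le
              · exact absurd (hT.ht_lt _ _ h') (not_lt.2 hge)
        have hW : (⟨w, hsw⟩ : {x : α // s ≤ x}) < u := Subtype.mk_lt_mk.2 hwu
        have IH' := IH (ht w) (by rw [hw]; exact h1) ⟨w, hsw⟩ rfl
        have hsub : ht w - ht s = δ := by rw [hw, Ordinal.add_sub_cancel]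
        rw [hsub] at IH'
        have hflt : f ⟨w, hsw⟩ < f u := f.lt_iff_lt.2 hW
        exact lt_of_le_of_lt IH' (hT.ht_lt _ _ hflt)
      rcases Ordinal.zero_or_succ_or_isSuccLimit (β - ht s) with h0 | ⟨δ, hδ⟩ | hlim
      · rw [h0, add_zero]; exact ht_mono hT (f u).2
      · rw [← hδ, add_succ]
        exact Order.succ_le_iff.2 (step δ (hδ ▸ Order.lt_succ δ))
      · exact (Ordinal.add_le_iff_of_isSuccLimit hlim).2 fun δ hδ => (step δ hδ).le
  exact main _ u rfl

lemma relHt_eq (hT : IsTreeHt ht) {s t : α}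
    (f : {x : α // s ≤ x} ≃o {x : α // t ≤ x}) (u : {x : α // s ≤ x}) :
    ht (f u).1 = ht t + (ht u.1 - ht s) := by
  have h1 := relHt_le hT f u
  have h2 := relHt_le hT f.symm (f u)
  rw [f.symm_apply_apply] at h2
  have ha : ht t ≤ ht (f u).1 := ht_mono hT (f u).2
  have hb : ht s ≤ ht u.1 := ht_mono hT u.2
  refine le_antisymm ?_ h1
  rw [← Ordinal.add_sub_cancel_of_le ha]
  apply add_le_add_right
  rw [← Ordinal.add_sub_cancel_of_le hb] at h2
  rw [add_le_add_iff_left] at h2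
  exact h2

/-- forward mapping of immediate successors -/
lemma succ_map (hT : IsTreeHt ht) {s t : α}
    (f : {x : α // s ≤ x} ≃o {x : α // t ≤ x}) (u : {x : α // s ≤ x}) {x : α}
    (hx : u.1 < x) (hxh : ht x = ht u.1 + 1) :
    (f u).1 < (f ⟨x, u.2.trans hx.le⟩).1 ∧
      ht (f ⟨x, u.2.trans hx.le⟩).1 = ht (f u).1 + 1 := by
  have hb : ht s ≤ ht u.1 := ht_mono hT u.2
  have hlt : f u < f ⟨x, u.2.trans hx.le⟩ := f.lt_iff_lt.2 (Subtype.mk_lt_mk.2 hx)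
  refine ⟨hlt, ?_⟩
  have hsub : ht x - ht s = (ht u.1 - ht s) + 1 := by
    have h1 : ht s + ((ht u.1 - ht s) + 1) = ht x := by
      rw [← add_assoc, Ordinal.add_sub_cancel_of_le hb, hxh]
    rw [← h1, Ordinal.add_sub_cancel]
  rw [relHt_eq hT f, relHt_eq hT f u, hsub, add_assoc]

lemma valence_eq (hT : IsTreeHt ht) {s t : α}
    (f : {x : α // s ≤ x} ≃o {x : α // t ≤ x}) (u : {x : α // s ≤ x}) :
    #({x : α | u.1 < x ∧ ht x = ht u.1 + 1}) =
      #({x : α | (f u).1 < x ∧ ht x = ht (f u).1 + 1}) := by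
  apply Cardinal.mk_congr
  refine Equiv.ofBijective
    (fun x => ⟨(f ⟨x.1, u.2.trans x.2.1.le⟩).1,
      (succ_map hT f u x.2.1 x.2.2).1, (succ_map hT f u x.2.1 x.2.2).2⟩) ⟨?_, ?_⟩
  · intro x y hxy
    have h1 : (f ⟨x.1, u.2.trans x.2.1.le⟩).1 = (f ⟨y.1, u.2.trans y.2.1.le⟩).1 := by
      simpa using congrArg Subtype.val hxy
    have h2 : (⟨x.1, u.2.trans x.2.1.le⟩ : {z : α // s ≤ z}) =
        ⟨y.1, u.2.trans y.2.1.le⟩ := f.injective (Subtype.ext h1)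
    exact Subtype.ext (by simpa using congrArg Subtype.val h2)
  · rintro ⟨y, hy1, hy2⟩
    set Y : {z : α // t ≤ z} := ⟨y, (f u).2.trans hy1.le⟩ with hY
    have hm := succ_map hT f.symm (f u) (x := y) hy1 hy2
    rw [f.symm_apply_apply] at hm
    set X : {z : α // s ≤ z} := f.symm ⟨y, (f u).2.trans hy1.le⟩ with hX
    have hXm : (⟨y, (f u).2.trans hy1.le⟩ : {z : α // t ≤ z}) = Y := rfl
    have hux : u.1 < X.1 := hm.1
    have hxh : ht X.1 = ht u.1 + 1 := hm.2
    refine ⟨⟨X.1, hux, hxh⟩, ?_⟩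
    apply Subtype.ext
    show (f ⟨X.1, u.2.trans hux.le⟩).1 = y
    have : (⟨X.1, u.2.trans hux.le⟩ : {z : α // s ≤ z}) = X := Subtype.ext rfl
    rw [this, hX, f.apply_symm_apply]
lemma absorb {a x : Ordinal} (h : a * ω ≤ x) : a + x = x := by
  have h1 : a + a * ω = a * ω := by
    calc a + a * ω = a * 1 + a * ω := by rw [mul_one]
      _ = a * (1 + ω) := (mul_add a 1 ω).symm
      _ = a * ω := by rw [one_add_omega0]
  calc a + x = a + (a * ω + (x - a * ω)) := by rw [Ordinal.add_sub_cancel_of_le h]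
    _ = (a + a * ω) + (x - a * ω) := (add_assoc _ _ _).symm
    _ = a * ω + (x - a * ω) := by rw [h1]
    _ = x := Ordinal.add_sub_cancel_of_le h

lemma no_iso_aux (hT : IsTreeHt ht)
    (hbound : ∀ t : α, ht t < (Cardinal.aleph 1).ord)
    (honto : ∀ β, β < (Cardinal.aleph 1).ord → ∃ t : α, ht t = β)
    (hsucc2 : ∀ t : α, ∃ s u : α, t < s ∧ t < u ∧ s ≠ u ∧ ht s = ht t + 1 ∧ ht u = ht t + 1)
    (hext : ∀ t : α, ∀ β, ht t < β → (∃ u : α, ht u = β) → ∃ s, t < s ∧ ht s = β)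
    (hval : ∀ s t : α, ht s = ht t → s ≠ t →
      #({u : α | s < u ∧ ht u = ht s + 1}) ≠ #({u : α | t < u ∧ ht u = ht t + 1}))
    {s t : α} (f : {x : α // s ≤ x} ≃o {x : α // t ≤ x}) (hne : s ≠ t)
    (hab : ht s ≤ ht t) : False := by
  -- Step 1: find v ≥ s with ht v = ht t and v ≠ t.
  obtain ⟨v, hsv, hvh, hvt⟩ : ∃ v : α, s ≤ v ∧ ht v = ht t ∧ v ≠ t := by
    rcases eq_or_lt_of_le hab with hab' | hab'
    · exact ⟨s, le_refl s, hab', hne⟩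
    · obtain ⟨v0, hv0, hv0h⟩ := hext s (ht t) hab' ⟨t, rfl⟩
      by_cases hv0t : v0 = t
      · -- then s < t; use two immediate successors of s
        have hst : s < t := hv0t ▸ hv0
        obtain ⟨s1, s2, h1, h2, h12, hh1, hh2⟩ := hsucc2 s
        have hpick : ¬ s1 ≤ t ∨ ¬ s2 ≤ t := by
          by_contra h
          push_neg at h
          apply h12
          rcases eq_or_lt_of_le h.1 with e1 | e1
          · rcases eq_or_lt_of_le h.2 with e2 | e2
            · rw [e1, e2]
            · exact absurd (hT.ht_lt _ _ e2) (by rw [hh2, ← e1, hh1]; exact lt_irrefl _)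
          · rcases eq_or_lt_of_le h.2 with e2 | e2
            · exact absurd (hT.ht_lt _ _ e1) (by rw [hh1, ← e2, hh2]; exact lt_irrefl _)
            · by_cases h12' : s1 = s2
              · exact h12'
              · rcases hT.pred_chain t e1 e2 h12' with h' | h'
                · exact absurd (hT.ht_lt _ _ h') (by rw [hh1, hh2]; exact lt_irrefl _)
                · exact absurd (hT.ht_lt _ _ h') (by rw [hh1, hh2]; exact lt_irrefl _)
        obtain ⟨s', hs', hs'h, hs't⟩ : ∃ s', s < s' ∧ ht s' = ht s + 1 ∧ ¬ s' ≤ t := by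
          rcases hpick with h | h
          · exact ⟨s1, h1, hh1, h⟩
          · exact ⟨s2, h2, hh2, h⟩
        have hle : ht s' ≤ ht t := by
          rw [hs'h]
          exact Order.add_one_le_iff.mpr hab'
        rcases eq_or_lt_of_le hle with e | e
        · exact ⟨s', hs'.le, e, fun h => hs't h.le⟩
        · obtain ⟨v, hv, hvh⟩ := hext s' (ht t) e ⟨t, rfl⟩
          refine ⟨v, (hs'.trans hv).le, hvh, fun h => hs't (h ▸ hv.le)⟩
      · exact ⟨v0, hv0.le, hv0h, hv0t⟩
  -- Step 2: find a high absorbing level H and a node w > v at level H.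
  set m := max (ht s) (ht t) with hm
  have hmlt : m < (Cardinal.aleph 1).ord := max_lt (hbound s) (hbound t)
  have hmw : m * ω < (Cardinal.aleph 1).ord := by
    rw [Cardinal.lt_ord] at hmlt ⊢
    rw [Ordinal.card_mul, Ordinal.card_omega0]
    exact Cardinal.mul_lt_of_lt (aleph0_le_aleph 1) hmlt aleph0_lt_aleph_one
  set H := max (m * ω) (ht v + 1) with hH
  have hHlt : H < (Cardinal.aleph 1).ord :=
    max_lt hmw ((Cardinal.isSuccLimit_ord (aleph0_le_aleph 1)).succ_lt (hbound v))
  have hvH : ht v < H := lt_of_lt_of_le (Order.lt_succ (ht v)) (le_max_right _ _)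
  obtain ⟨w, hvw, hwH⟩ := hext v H hvH (honto H hHlt)
  have hsw : s ≤ w := hsv.trans hvw.le
  -- Step 3: w is a fixed point of f.
  have habs_s : ht s + H = H := absorb ((mul_le_mul_left (le_max_left _ _) ω).trans (le_max_left _ _))
  have habs_t : ht t + H = H := absorb ((mul_le_mul_left (le_max_right _ _) ω).trans (le_max_left _ _))
  have hsub : H - ht s = H := by
    conv_lhs => rw [← habs_s]
    rw [Ordinal.add_sub_cancel]
  set W : {x : α // s ≤ x} := ⟨w, hsw⟩ with hW
  have hfW : ht (f W).1 = ht W.1 := by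
    rw [relHt_eq hT f W]
    show ht t + (ht w - ht s) = ht w
    rw [hwH, hsub, habs_t]
  have hfix : (f W).1 = W.1 := by
    by_contra hneq
    exact hval _ _ hfW hneq ((valence_eq hT f W).symm)
  -- Step 4: conclude v = t, contradiction.
  have htw : t < w := by
    have h1 : t ≤ w := (f W).2.trans_eq hfix
    rcases eq_or_lt_of_le h1 with e | e
    · exfalso; apply ne_of_lt hvH; rw [hvh, e]; exact hwH
    · exact e
  have : v = t := by
    rcases hT.pred_chain w hvw htw hvt with h' | h'
    · exact absurd (hT.ht_lt _ _ h') (by rw [hvh]; exact lt_irrefl _)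
    · exact absurd (hT.ht_lt _ _ h') (by rw [hvh]; exact lt_irrefl _)
  exact hvt this
end Rigid

/-- If on each level of a normal Souslin tree no two distinct nodes have the same number
of immediate successors, then the tree is totally rigid. -/
theorem distinct_valences_totally_rigid [PartialOrder α] (ht : α → Ordinal)
    (hS : IsSouslinTree ht) (hN : IsNormalTree ht)
    (hval : ∀ s t : α, ht s = ht t → s ≠ t →
      #({u : α | s < u ∧ ht u = ht s + 1}) ≠ #({u : α | t < u ∧ ht u = ht t + 1})) :
    ∀ s t : α, s ≠ t → IsEmpty ({x : α // s ≤ x} ≃o {x : α // t ≤ x}) := by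
  intro s t hst
  refine ⟨fun f => ?_⟩
  obtain ⟨hT, hbound, honto, -, -⟩ := hS
  obtain ⟨-, hsucc2, hext, -⟩ := hN
  rcases le_total (ht s) (ht t) with h | h
  · exact Rigid.no_iso_aux hT hbound honto hsucc2 hext hval f hst h
  · exact Rigid.no_iso_aux hT hbound honto hsucc2 hext hval f.symm (Ne.symm hst) h
end
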